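/- arXiv:1304.0630 — 4 statements merged into one kernel-verified Lean document; each statement's English description precedes it below -/
import Mathlib

section
/- Let ψ: ℝⁿ → ℝ ∪ {+∞} be an essentially-continuous convex function. Fix a unit vector θ ∈ ℝⁿ and let H = θ^⊥ be the hyperplane orthogonal to θ. Then for (n−1)-dimensional Hausdorff-almost every y ∈ H, the function t ↦ ψ(y + tθ) from ℝ to ℝ ∪ {+∞} is continuous on all of ℝ, and is locally Lipschitz on the interior of the interval on which it is finite. -/
open MeasureTheory Filter
open scoped ENNReal Topology

noncomputable section

/-- Convexity for `EReal`-valued functions on `ℝⁿ`. -/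
def ERealConvexOn {n : ℕ} (ψ : EuclideanSpace ℝ (Fin n) → EReal) : Prop :=
  ∀ x y : EuclideanSpace ℝ (Fin n), ∀ a b : ℝ, 0 ≤ a → 0 ≤ b → a + b = 1 →
    ψ (a • x + b • y) ≤ (a : EReal) * ψ x + (b : EReal) * ψ y

/-- A convex function `ψ : ℝⁿ → ℝ ∪ {+∞}` is essentially-continuous if it is lower
semi-continuous and its set of discontinuity points has zero `(n-1)`-dimensional
Hausdorff measure. -/
def EssentiallyContinuous {n : ℕ} (ψ : EuclideanSpace ℝ (Fin n) → EReal) : Prop :=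
  LowerSemicontinuous ψ ∧
    μH[(n : ℝ) - 1] {x : EuclideanSpace ℝ (Fin n) | ¬ ContinuousAt ψ x} = 0

/-- The measure with density `e^{-ψ}` with respect to Lebesgue measure. -/
def expMeasure {n : ℕ} (ψ : EuclideanSpace ℝ (Fin n) → EReal) :
    Measure (EuclideanSpace ℝ (Fin n)) :=
  volume.withDensity fun x => (-ψ x).exp

/-- `μ` is the moment measure of `ψ` : the push-forward of `e^{-ψ(x)} dx` under the
(a.e.-defined) gradient map `x ↦ ∇ψ(x)`. -/
def IsMomentMeasure {n : ℕ} (ψ : EuclideanSpace ℝ (Fin n) → EReal)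
    (μ : Measure (EuclideanSpace ℝ (Fin n))) : Prop :=
  ∃ g : EuclideanSpace ℝ (Fin n) → EuclideanSpace ℝ (Fin n),
    AEMeasurable g (expMeasure ψ) ∧
      (∀ᵐ x ∂(expMeasure ψ), HasGradientAt (fun y => (ψ y).toReal) (g x) x) ∧
      μ = (expMeasure ψ).map g

/-- The Legendre transform of `f : ℝⁿ → ℝ ∪ {±∞}`:
`f*(y) = sup { ⟨x,y⟩ - f x : f x < +∞ }`. -/
def legendre {n : ℕ} (f : EuclideanSpace ℝ (Fin n) → EReal) :
    EuclideanSpace ℝ (Fin n) → EReal :=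
  fun y => ⨆ x ∈ {x : EuclideanSpace ℝ (Fin n) | f x ≠ ⊤},
    ((inner ℝ x y : ℝ) : EReal) - f x

/-- Integrability of an `EReal`-valued function: a.e. finite with integrable real part. -/
def ERealIntegrable {n : ℕ} (φ : EuclideanSpace ℝ (Fin n) → EReal)
    (μ : Measure (EuclideanSpace ℝ (Fin n))) : Prop :=
  (∀ᵐ x ∂μ, φ x ≠ ⊤ ∧ φ x ≠ ⊥) ∧ Integrable (fun x => (φ x).toReal) μ

/-- The support of a Borel measure: points all of whose open neighborhoods have
positive measure. -/
def measureSupport {n : ℕ} (μ : Measure (EuclideanSpace ℝ (Fin n))) :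
    Set (EuclideanSpace ℝ (Fin n)) :=
  {x | ∀ U : Set (EuclideanSpace ℝ (Fin n)), IsOpen U → x ∈ U → 0 < μ U}

/-- The nonnegative part of an extended real, as an extended nonnegative real. -/
def ERealPos (x : EReal) : ℝ≥0∞ := if x = ⊤ then ⊤ else ENNReal.ofReal x.toReal

end

/-- for an essentially-continuous convex function `ψ` and a unit vector `θ`,
for `H^{n-1}`-almost every `y` in the hyperplane `θ^⊥`, the function `t ↦ ψ(y + tθ)` is
continuous on `ℝ` and locally Lipschitz in the interior of the interval where it is finite. -/
theorem essentially_continuous_slices {n : ℕ}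
    (ψ : EuclideanSpace ℝ (Fin n) → EReal) (hbot : ∀ x, ψ x ≠ ⊥)
    (hconv : ERealConvexOn ψ) (hec : EssentiallyContinuous ψ)
    (θ : EuclideanSpace ℝ (Fin n)) (hθ : ‖θ‖ = 1) :
    μH[(n : ℝ) - 1] {y : EuclideanSpace ℝ (Fin n) | (inner ℝ y θ : ℝ) = 0 ∧
      ¬ (Continuous (fun t : ℝ => ψ (y + t • θ)) ∧
        LocallyLipschitzOn (interior {t : ℝ | ψ (y + t • θ) ≠ ⊤})
          (fun t : ℝ => (ψ (y + t • θ)).toReal))} = 0 := by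
  classical
  -- n ≥ 1
  rcases Nat.eq_zero_or_pos n with hn | hn
  · exfalso
    subst hn
    have hzero : θ = 0 := by
      ext i
      exact i.elim0
    rw [hzero, norm_zero] at hθ
    norm_num at hθ
  have hd : (0:ℝ) ≤ (n:ℝ) - 1 := by
    have : (1:ℝ) ≤ n := by exact_mod_cast hn
    linarith
  set D := {x : EuclideanSpace ℝ (Fin n) | ¬ ContinuousAt ψ x} with hDdef
  have hD : μH[(n:ℝ)-1] D = 0 := hec.2
  set π : EuclideanSpace ℝ (Fin n) → EuclideanSpace ℝ (Fin n) :=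
    fun x => x - (inner ℝ x θ : ℝ) • θ with hπ
  have hlip : LipschitzWith 2 π := by
    apply LipschitzWith.of_dist_le_mul
    intro x y
    have hxy : π x - π y = (x - y) - ((inner ℝ (x - y) θ : ℝ)) • θ := by
      simp only [hπ, inner_sub_left, sub_smul]
      abel
    rw [dist_eq_norm, dist_eq_norm, hxy]
    calc ‖(x - y) - (inner ℝ (x - y) θ : ℝ) • θ‖
        ≤ ‖x - y‖ + ‖(inner ℝ (x - y) θ : ℝ) • θ‖ := norm_sub_le _ _
      _ ≤ ‖x - y‖ + ‖x - y‖ := by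
          rw [norm_smul, Real.norm_eq_abs]
          have h1 : |(inner ℝ (x - y) θ : ℝ)| ≤ ‖x - y‖ * ‖θ‖ := abs_real_inner_le_norm _ _
          rw [hθ, mul_one] at h1
          have h2 : |(inner ℝ (x - y) θ : ℝ)| * ‖θ‖ ≤ ‖x - y‖ := by
            rw [hθ, mul_one]; exact h1
          linarith
      _ = 2 * ‖x - y‖ := by ring
  have hsub : {y : EuclideanSpace ℝ (Fin n) | (inner ℝ y θ : ℝ) = 0 ∧
      ¬ (Continuous (fun t : ℝ => ψ (y + t • θ)) ∧
        LocallyLipschitzOn (interior {t : ℝ | ψ (y + t • θ) ≠ ⊤})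
          (fun t : ℝ => (ψ (y + t • θ)).toReal))} ⊆ π '' D := by
    rintro y ⟨hy0, hbad⟩
    by_contra hyD
    apply hbad
    -- every point on the line is a continuity point of ψ
    have hline : ∀ t : ℝ, ContinuousAt ψ (y + t • θ) := by
      intro t
      by_contra hc
      apply hyD
      refine ⟨y + t • θ, hc, ?_⟩
      have hinner : (inner ℝ (y + t • θ) θ : ℝ) = t := by
        rw [inner_add_left, real_inner_smul_left, hy0, real_inner_self_eq_norm_sq, hθ]
        ring
      simp only [hπ, hinner]
      abel
    set f : ℝ → EReal := fun t => ψ (y + t • θ) with hf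
    -- continuity of the slice
    have hcontline : Continuous (fun t : ℝ => y + t • θ) :=
      continuous_const.add (continuous_id.smul continuous_const)
    have hcont : Continuous f := by
      rw [continuous_iff_continuousAt]
      intro t
      exact ContinuousAt.comp (g := ψ) (f := fun s : ℝ => y + s • θ) (x := t)
        (hline t) hcontline.continuousAt
    -- convexity of the slice
    have hcomb : ∀ (s t a b : ℝ), a + b = 1 →
        y + (a * s + b * t) • θ = a • (y + s • θ) + b • (y + t • θ) := by
      intro s t a b hab
      rw [smul_add, smul_add, add_add_add_comm, Convex.combo_self hab, add_smul,
        smul_smul, smul_smul]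
    have hfconv : ∀ s t a b : ℝ, 0 ≤ a → 0 ≤ b → a + b = 1 →
        f (a * s + b * t) ≤ (a : EReal) * f s + (b : EReal) * f t := by
      intro s t a b ha hb hab
      have := hconv (y + s • θ) (y + t • θ) a b ha hb hab
      rwa [← hcomb s t a b hab] at this
    set S := {t : ℝ | f t ≠ ⊤} with hS
    have hSconv : Convex ℝ S := by
      intro s hs t ht a b ha hb hab
      have hle := hfconv s t a b ha hb hab
      obtain ⟨u, hu⟩ : ∃ u : ℝ, f s = (u : EReal) :=
        ⟨(f s).toReal, (EReal.coe_toReal hs (hbot _)).symm⟩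
      obtain ⟨v, hv⟩ : ∃ v : ℝ, f t = (v : EReal) :=
        ⟨(f t).toReal, (EReal.coe_toReal ht (hbot _)).symm⟩
      show f (a • s + b • t) ≠ ⊤
      rw [smul_eq_mul, smul_eq_mul]
      intro htop
      rw [htop, hu, hv, ← EReal.coe_mul, ← EReal.coe_mul, ← EReal.coe_add] at hle
      exact EReal.coe_ne_top _ (top_le_iff.mp hle)
    have hg : ConvexOn ℝ (interior S) (fun t => (f t).toReal) := by
      refine ⟨hSconv.interior, ?_⟩
      intro s hs t ht a b ha hb hab
      have hs' : f s ≠ ⊤ := interior_subset hs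
      have ht' : f t ≠ ⊤ := interior_subset ht
      have hmem : a • s + b • t ∈ S := hSconv (interior_subset hs) (interior_subset ht) ha hb hab
      rw [smul_eq_mul, smul_eq_mul] at hmem
      have hle := hfconv s t a b ha hb hab
      obtain ⟨u, hu⟩ : ∃ u : ℝ, f s = (u : EReal) :=
        ⟨(f s).toReal, (EReal.coe_toReal hs' (hbot _)).symm⟩
      obtain ⟨v, hv⟩ : ∃ v : ℝ, f t = (v : EReal) :=
        ⟨(f t).toReal, (EReal.coe_toReal ht' (hbot _)).symm⟩
      rw [hu, hv, ← EReal.coe_mul, ← EReal.coe_mul, ← EReal.coe_add] at hle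
      have htr := EReal.toReal_le_toReal hle (hbot _) (EReal.coe_ne_top _)
      rw [EReal.toReal_coe] at htr
      simpa [hu, hv, smul_eq_mul] using htr
    exact ⟨hcont, hg.locallyLipschitzOn isOpen_interior⟩
  refine le_antisymm (le_trans (measure_mono hsub) ?_) zero_le
  have hkey := hlip.hausdorffMeasure_image_le hd D
  rw [hD, mul_zero] at hkey
  exact hkey
end

section
/- Let ψ: ℝⁿ → ℝ ∪ {+∞} be an essentially-continuous convex function with 0 < ∫ e^{-ψ} < +∞, and let μ be its moment measure. Then the support of μ is not contained in any proper linear subspace E ⊊ ℝⁿ. -/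
open MeasureTheory Filter
open scoped ENNReal Topology

section MomentHelpers

open Set



-- L0
lemma mm_null_compl {α : Type*} [TopologicalSpace α] [MeasurableSpace α]
    [SecondCountableTopology α] (μ : Measure α) :
    μ {x | ∀ U : Set α, IsOpen U → x ∈ U → 0 < μ U}ᶜ = 0 := by
  set S : Set (Set α) := {U | IsOpen U ∧ μ U = 0} with hS
  obtain ⟨T, hTc, hTS, hTU⟩ := TopologicalSpace.isOpen_sUnion_countable S (fun U hU => hU.1)
  have hUnull : μ (⋃₀ S) = 0 := by
    rw [← hTU]
    exact (measure_sUnion_null_iff hTc).2 fun U hU => (hTS hU).2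
  refine measure_mono_null ?_ hUnull
  intro x hx
  simp only [mem_compl_iff, mem_setOf_eq, not_forall] at hx
  obtain ⟨U, hUo, hxU, hpos⟩ := hx
  exact ⟨U, ⟨hUo, le_antisymm (not_lt.1 hpos) zero_le⟩, hxU⟩

-- L1a : derivative at left endpoint ≤ slope
lemma deriv_le_slope {J : Set ℝ} {u : ℝ → ℝ} (hf : ConvexOn ℝ J u) {s t : ℝ} {d : ℝ}
    (hs : s ∈ J) (ht : t ∈ J) (hst : s < t) (hd : HasDerivAt u d s) :
    d ≤ (u t - u s) / (t - s) := by
  have hIoo : ∀ x ∈ Ioo s t, x ∈ J := fun x hx =>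
    hf.1.ordConnected.out hs ht ⟨hx.1.le, hx.2.le⟩
  have htend : Tendsto (slope u s) (𝓝[>] s) (𝓝 d) :=
    (hasDerivAt_iff_tendsto_slope.1 hd).mono_left
      (nhdsWithin_mono _ fun x hx => ne_of_gt hx)
  refine le_of_tendsto htend ?_
  filter_upwards [Ioo_mem_nhdsGT_of_mem (left_mem_Ico.2 hst)] with x hx
  rw [slope_def_field]
  have := hf.secant_mono hs (hIoo x hx) ht (ne_of_gt hx.1) (ne_of_gt hst) hx.2.le
  simpa [div_eq_div_iff] using this

lemma slope_le_deriv {J : Set ℝ} {u : ℝ → ℝ} (hf : ConvexOn ℝ J u) {s t : ℝ} {d : ℝ}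
    (hs : s ∈ J) (ht : t ∈ J) (hst : s < t) (hd : HasDerivAt u d t) :
    (u t - u s) / (t - s) ≤ d := by
  have hIoo : ∀ x ∈ Ioo s t, x ∈ J := fun x hx =>
    hf.1.ordConnected.out hs ht ⟨hx.1.le, hx.2.le⟩
  have htend : Tendsto (slope u t) (𝓝[<] t) (𝓝 d) :=
    (hasDerivAt_iff_tendsto_slope.1 hd).mono_left
      (nhdsWithin_mono _ fun x hx => ne_of_lt hx)
  refine ge_of_tendsto htend ?_
  filter_upwards [Ioo_mem_nhdsLT_of_mem (right_mem_Ioc.2 hst)] with x hx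
  rw [slope_def_field]
  have := hf.secant_mono ht hs (hIoo x hx) (ne_of_lt hst) (ne_of_lt hx.2) hx.1.le
  calc (u t - u s) / (t - s) = (u s - u t) / (s - t) := by rw [← neg_div_neg_eq]; ring_nf
  _ ≤ (u x - u t) / (x - t) := this

-- L1 : two critical points of a convex function have equal values
lemma convex_eq_of_deriv_zero {J : Set ℝ} {u : ℝ → ℝ} (hf : ConvexOn ℝ J u) {s t : ℝ}
    (hs : s ∈ J) (ht : t ∈ J)
    (hds : HasDerivAt u 0 s) (hdt : HasDerivAt u 0 t) : u s = u t := by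
  rcases lt_trichotomy s t with h | h | h
  · have h1 := deriv_le_slope hf hs ht h hds
    have h2 := slope_le_deriv hf hs ht h hdt
    have h3 : (u t - u s) / (t - s) = 0 := le_antisymm h2 h1
    have h4 : t - s ≠ 0 := ne_of_gt (by linarith)
    have := (div_eq_zero_iff.1 h3).resolve_right h4
    linarith
  · rw [h]
  · have h1 := deriv_le_slope hf ht hs h hdt
    have h2 := slope_le_deriv hf ht hs h hds
    have h3 : (u s - u t) / (s - t) = 0 := le_antisymm h2 h1
    have h4 : s - t ≠ 0 := ne_of_gt (by linarith)
    have := (div_eq_zero_iff.1 h3).resolve_right h4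
    linarith



-- L3 : directional derivative from gradient
lemma hasDerivAt_line {n : ℕ} {f : EuclideanSpace ℝ (Fin n) → ℝ}
    {w c θ : EuclideanSpace ℝ (Fin n)} {t₀ : ℝ}
    (hf : HasGradientAt f w (c + t₀ • θ)) (hw : (inner ℝ w θ : ℝ) = 0) :
    HasDerivAt (fun t : ℝ => f (c + t • θ)) 0 t₀ := by
  have hL : HasDerivAt (fun t : ℝ => c + t • θ) θ t₀ := by
    simpa using ((hasDerivAt_id t₀).smul_const θ).const_add c
  have := (hf.hasFDerivAt.comp_hasDerivAt t₀ hL)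
  have h2 : HasDerivAt (f ∘ fun t : ℝ => c + t • θ) 0 t₀ := by
    simpa [InnerProductSpace.toDual_apply_apply, hw] using this
  exact h2

lemma euclid_abs_apply_le_norm {m : ℕ} (v : EuclideanSpace ℝ (Fin (m+1))) (i : Fin (m+1)) :
    |v i| ≤ ‖v‖ := by
  have h := abs_real_inner_le_norm (EuclideanSpace.single i (1 : ℝ)) v
  rw [EuclideanSpace.inner_single_left] at h
  simpa using h

lemma line_discont (v : ℝ → EReal) (hbot : ∀ t, v t ≠ ⊥)
    (hconv : ∀ s t : ℝ, ∀ a b : ℝ, 0 ≤ a → 0 ≤ b → a + b = 1 →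
      v (a * s + b * t) ≤ (a : EReal) * v s + (b : EReal) * v t)
    (hmeas : Measurable v)
    (hfin : ∫⁻ t, (-(v t)).exp < ⊤) (hpos : 0 < ∫⁻ t, (-(v t)).exp)
    (hae : ∀ᵐ t : ℝ, v t ≠ ⊤ → HasDerivAt (fun s => (v s).toReal) 0 t) :
    ∃ b : ℝ, ¬ ContinuousAt v b := by
  classical
  set u : ℝ → ℝ := fun t => (v t).toReal with hu
  set J : Set ℝ := {t | v t ≠ ⊤} with hJ
  have hJmeas : MeasurableSet J := (hmeas (measurableSet_singleton ⊤)).compl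
  have hvcoe : ∀ t ∈ J, v t = ((u t : ℝ) : EReal) := fun t ht =>
    (EReal.coe_toReal ht (hbot t)).symm
  have hJc : ∀ x ∈ J, ∀ y ∈ J, ∀ a b : ℝ, 0 ≤ a → 0 ≤ b → a + b = 1 →
      a * x + b * y ∈ J ∧ u (a * x + b * y) ≤ a * u x + b * u y := by
    intro x hx y hy a b ha hb hab
    have h1 : v (a * x + b * y) ≤ ((a * u x + b * u y : ℝ) : EReal) := by
      have := hconv x y a b ha hb hab
      rwa [hvcoe x hx, hvcoe y hy, ← EReal.coe_mul, ← EReal.coe_mul, ← EReal.coe_add] at this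
    have hmem : a * x + b * y ∈ J := by
      intro htop
      rw [htop] at h1
      exact EReal.coe_ne_top _ (top_le_iff.1 h1)
    refine ⟨hmem, ?_⟩
    have := EReal.toReal_le_toReal h1 (hbot _) (EReal.coe_ne_top _)
    rw [EReal.toReal_coe] at this
    exact this
  have hJconv : Convex ℝ J := by
    intro x hx y hy a b ha hb hab
    simpa [smul_eq_mul] using (hJc x hx y hy a b ha hb hab).1
  have hUconv : ConvexOn ℝ J u := by
    refine ⟨hJconv, ?_⟩
    intro x hx y hy a b ha hb hab
    simpa [smul_eq_mul] using (hJc x hx y hy a b ha hb hab).2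
  set F : ℝ → ℝ≥0∞ := fun t => (-(v t)).exp with hF
  have hF0 : ∀ t, F t = 0 ↔ v t = ⊤ := by
    intro t; simp [hF, EReal.exp_eq_zero_iff, EReal.neg_eq_bot_iff]
  have hJpos : 0 < volume J := by
    rcases eq_or_lt_of_le (zero_le : 0 ≤ volume J) with h | h
    · exfalso
      have hae0 : ∀ᵐ t : ℝ, F t = 0 := by
        have : ∀ᵐ t : ℝ, t ∉ J := by
          rw [ae_iff]
          simpa using h.symm
        filter_upwards [this] with t ht
        rw [hF0]
        simpa [hJ] using ht
      have hFae : F =ᵐ[volume] (fun _ => (0 : ℝ≥0∞)) := hae0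
      have : ∫⁻ t, F t = 0 := by rw [lintegral_congr_ae hFae]; simp
      rw [this] at hpos; exact lt_irrefl _ hpos
    · exact h
  -- the set of critical points
  set S : Set ℝ := {t | t ∈ J ∧ HasDerivAt u 0 t} with hS
  have hJS : volume (J \ S) = 0 := by
    rw [ae_iff] at hae
    refine measure_mono_null ?_ hae
    intro t ht
    simp only [mem_setOf_eq, not_forall]
    exact ⟨by simpa [hJ] using ht.1, fun hd => ht.2 ⟨ht.1, hd⟩⟩
  have hSnon : S.Nonempty := by
    by_contra hempty
    rw [not_nonempty_iff_eq_empty] at hempty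
    have : volume J = 0 := by
      refine measure_mono_null (fun t ht => ?_) hJS
      exact ⟨ht, by simp [hempty]⟩
    exact absurd this (ne_of_gt hJpos)
  obtain ⟨s₀, hs₀⟩ := hSnon
  set c : ℝ := u s₀ with hc
  have hSc : ∀ t ∈ S, u t = c := fun t ht =>
    convex_eq_of_deriv_zero hUconv ht.1 hs₀.1 ht.2 hs₀.2
  have hvS : ∀ t ∈ S, v t = ((c : ℝ) : EReal) := by
    intro t ht
    rw [hvcoe t ht.1, hSc t ht]
  have hFS : ∀ t ∈ S, F t = ENNReal.ofReal (Real.exp (-c)) := by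
    intro t ht
    rw [hF]
    simp only [hvS t ht, ← EReal.coe_neg, EReal.exp_coe]
  set ε : ℝ≥0∞ := ENNReal.ofReal (Real.exp (-c)) with hε
  have hεpos : 0 < ε := ENNReal.ofReal_pos.2 (Real.exp_pos _)
  -- J is bounded above
  have hbdd : BddAbove J := by
    by_contra hbdd
    rw [not_bddAbove_iff] at hbdd
    have hIci : Ici s₀ ⊆ J := by
      intro x hx
      obtain ⟨z, hz, hxz⟩ := hbdd x
      exact hJconv.ordConnected.out hs₀.1 hz ⟨hx, hxz.le⟩
    set A : Set ℝ := J ∩ Ici s₀ with hA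
    have hAmeas : MeasurableSet A := hJmeas.inter measurableSet_Ici
    have hAvol : volume A = ⊤ := by
      have : Ici s₀ ⊆ A := fun x hx => ⟨hIci hx, hx⟩
      refine top_le_iff.1 ?_
      calc (⊤ : ℝ≥0∞) = volume (Ici s₀) := (Real.volume_Ici).symm
      _ ≤ volume A := measure_mono this
    have hres : ∀ᵐ t ∂(volume.restrict A), F t = ε := by
      rw [ae_restrict_iff' hAmeas]
      have hnot : ∀ᵐ t : ℝ, t ∉ J \ S := by
        rw [ae_iff]; simp only [not_not]; exact hJS
      filter_upwards [hnot] with t ht hta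
      have htS : t ∈ S := by
        by_contra htS
        exact ht ⟨hta.1, htS⟩
      exact hFS t htS
    have : ∫⁻ t in A, F t = ⊤ := by
      rw [lintegral_congr_ae hres, setLIntegral_const, hAvol, ENNReal.mul_top (ne_of_gt hεpos)]
    have hle : (⊤ : ℝ≥0∞) ≤ ∫⁻ t, F t := this ▸ setLIntegral_le_lintegral A F
    exact absurd hfin (by simpa using hle)
  set b : ℝ := sSup J with hb
  have hJle : ∀ t ∈ J, t ≤ b := fun t ht => le_csSup hbdd ht
  have htop : ∀ t, b < t → v t = ⊤ := by
    intro t ht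
    by_contra htt
    exact absurd (hJle t htt) (not_le.2 ht)
  have hnear : ∀ δ : ℝ, 0 < δ → ∃ t, t ∈ S ∧ b - δ < t ∧ t ≤ b := by
    intro δ hδ
    have hIpos : 0 < volume (J ∩ Ioc (b - δ) b) := by
      rcases eq_or_lt_of_le (zero_le : 0 ≤ volume (J ∩ Ioc (b - δ) b)) with h0 | h0
      · exfalso
        by_cases hw : ∃ w ∈ J, w ≤ b - δ
        · obtain ⟨w, hwJ, hwle⟩ := hw
          obtain ⟨z, hzJ, hzgt⟩ := exists_lt_of_lt_csSup ⟨s₀, hs₀.1⟩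
            (show b - δ < sSup J by rw [← hb]; linarith)
          have hsub : Ioc (b - δ) z ⊆ J ∩ Ioc (b - δ) b := by
            intro x hx
            refine ⟨hJconv.ordConnected.out hwJ hzJ ⟨by linarith [hx.1], hx.2⟩, hx.1,
              le_trans hx.2 (hJle z hzJ)⟩
          have : volume (Ioc (b - δ) z) ≤ volume (J ∩ Ioc (b - δ) b) := measure_mono hsub
          rw [← h0, Real.volume_Ioc] at this
          simp only [nonpos_iff_eq_zero, ENNReal.ofReal_eq_zero] at this
          linarith
        · push_neg at hw
          have : J ⊆ J ∩ Ioc (b - δ) b := fun x hx => ⟨hx, hw x hx, hJle x hx⟩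
          have h2 : volume J ≤ volume (J ∩ Ioc (b - δ) b) := measure_mono this
          rw [← h0] at h2
          exact absurd (le_antisymm h2 zero_le) (ne_of_gt hJpos)
      · exact h0
    by_contra hcon
    push_neg at hcon
    have : J ∩ Ioc (b - δ) b ⊆ J \ S := by
      intro x hx
      exact ⟨hx.1, fun hxS => absurd hx.2.2 (not_le.2 (hcon x hxS hx.2.1))⟩
    have := measure_mono_null this hJS
    exact absurd this (ne_of_gt hIpos)
  choose tseq htseq using fun k : ℕ => hnear (1 / (k + 1)) (by positivity)
  have httend : Tendsto tseq atTop (𝓝 b) := by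
    refine tendsto_of_tendsto_of_tendsto_of_le_of_le
      (g := fun k : ℕ => b - 1 / (k + 1)) (h := fun _ : ℕ => b) ?_ tendsto_const_nhds
      (fun k => (htseq k).2.1.le) (fun k => (htseq k).2.2)
    have : Tendsto (fun k : ℕ => 1 / ((k : ℝ) + 1)) atTop (𝓝 0) :=
      tendsto_one_div_add_atTop_nhds_zero_nat
    simpa using tendsto_const_nhds.sub this
  refine ⟨b, fun hcont => ?_⟩
  have h1 : Tendsto (fun k => v (tseq k)) atTop (𝓝 (v b)) := (hcont.tendsto).comp httend
  have h1' : Tendsto (fun _ : ℕ => ((c : ℝ) : EReal)) atTop (𝓝 (v b)) := by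
    refine h1.congr (fun k => ?_)
    exact hvS _ (htseq k).1
  have hvb1 : v b = ((c : ℝ) : EReal) := tendsto_nhds_unique h1' tendsto_const_nhds
  have h2 : Tendsto (fun k : ℕ => v (b + 1 / ((k : ℝ) + 1))) atTop (𝓝 (v b)) := by
    refine (hcont.tendsto).comp ?_
    have : Tendsto (fun k : ℕ => 1 / ((k : ℝ) + 1)) atTop (𝓝 0) :=
      tendsto_one_div_add_atTop_nhds_zero_nat
    simpa using tendsto_const_nhds.add this
  have h2' : Tendsto (fun _ : ℕ => (⊤ : EReal)) atTop (𝓝 (v b)) := by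
    refine h2.congr (fun k => ?_)
    refine htop _ ?_
    have : (0:ℝ) < 1 / ((k : ℝ) + 1) := by positivity
    linarith
  have hvb2 : v b = (⊤ : EReal) := tendsto_nhds_unique h2' tendsto_const_nhds
  rw [hvb1] at hvb2
  exact EReal.coe_ne_top _ hvb2

private lemma moment_aux {n : ℕ}
    (ψ : EuclideanSpace ℝ (Fin n) → EReal) (hbot : ∀ x, ψ x ≠ ⊥)
    (hconv : ∀ x y : EuclideanSpace ℝ (Fin n), ∀ a b : ℝ, 0 ≤ a → 0 ≤ b → a + b = 1 →
      ψ (a • x + b • y) ≤ (a : EReal) * ψ x + (b : EReal) * ψ y)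
    (hlsc : LowerSemicontinuous ψ)
    (hΔ0 : μH[(n : ℝ) - 1] {x : EuclideanSpace ℝ (Fin n) | ¬ ContinuousAt ψ x} = 0)
    (h0 : 0 < ∫⁻ x, (-ψ x).exp) (h1 : (∫⁻ x, (-ψ x).exp) < ⊤)
    (μ : MeasureTheory.Measure (EuclideanSpace ℝ (Fin n)))
    (g : EuclideanSpace ℝ (Fin n) → EuclideanSpace ℝ (Fin n))
    (hg : AEMeasurable g (volume.withDensity fun x => (-ψ x).exp))
    (hgrad : ∀ᵐ x ∂(volume.withDensity fun x => (-ψ x).exp),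
      HasGradientAt (fun y => (ψ y).toReal) (g x) x)
    (hμmap : μ = (volume.withDensity fun x => (-ψ x).exp).map g)
    (hsupp : μ {x | ∀ U : Set (EuclideanSpace ℝ (Fin n)), IsOpen U → x ∈ U → 0 < μ U}ᶜ = 0) :
    ∀ E : Submodule ℝ (EuclideanSpace ℝ (Fin n)),
      {x | ∀ U : Set (EuclideanSpace ℝ (Fin n)), IsOpen U → x ∈ U → 0 < μ U}
        ⊆ (E : Set (EuclideanSpace ℝ (Fin n))) → E = ⊤ := by
  intro E hE
  by_contra hne
  -- reduce to n = m + 1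
  rcases Nat.eq_zero_or_pos n with hn | hn
  · subst hn
    refine hne ?_
    rw [Submodule.eq_top_iff']
    intro x
    have : x = 0 := by ext i; exact i.elim0
    rw [this]; exact E.zero_mem
  obtain ⟨m, rfl⟩ : ∃ m, n = m + 1 := ⟨n - 1, (Nat.succ_pred_eq_of_pos hn).symm⟩
  classical
  set f : EuclideanSpace ℝ (Fin (m+1)) → ℝ := fun x => (ψ x).toReal with hf
  set F : EuclideanSpace ℝ (Fin (m+1)) → ℝ≥0∞ := fun x => (-ψ x).exp with hFdef
  have hψmeas : Measurable ψ := hlsc.measurable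
  have hFmeas : Measurable F :=
    EReal.exp_monotone.measurable.comp (continuous_neg.measurable.comp hψmeas)
  set ν : Measure (EuclideanSpace ℝ (Fin (m+1))) := volume.withDensity F with hν
  set Δ : Set (EuclideanSpace ℝ (Fin (m+1))) := {x | ¬ ContinuousAt ψ x} with hΔdef
  -- choose a unit vector orthogonal to E
  have hEbot : Eᗮ ≠ ⊥ := fun h => hne (Submodule.orthogonal_eq_bot_iff.1 h)
  obtain ⟨θ', hθ'E, hθ'0⟩ := Submodule.exists_mem_ne_zero_of_ne_bot hEbot
  set θ : EuclideanSpace ℝ (Fin (m+1)) := ‖θ'‖⁻¹ • θ' with hθdef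
  have hθE : θ ∈ Eᗮ := Submodule.smul_mem _ _ hθ'E
  have hθnorm : ‖θ‖ = 1 := norm_smul_inv_norm hθ'0
  clear_value θ
  -- orthonormal basis whose first vector is θ
  have hON : Orthonormal ℝ (({0} : Set (Fin (m+1))).restrict (fun _ => θ)) := by
    constructor
    · intro i; exact hθnorm
    · intro i j hij
      exact absurd (Subtype.ext ((i.2 : (i : Fin (m+1)) ∈ ({0} : Set (Fin (m+1)))).trans
        ((j.2 : (j : Fin (m+1)) ∈ ({0} : Set (Fin (m+1)))).symm))) hij
  obtain ⟨B, hB⟩ := Orthonormal.exists_orthonormalBasis_extension_of_card_eq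
      (by simp [finrank_euclideanSpace_fin]) hON
  have hBθ : B 0 = θ := hB 0 rfl
  -- the parametrization of lines in direction θ
  set e2 := MeasurableEquiv.piFinSuccAbove (fun _ : Fin (m+1) => ℝ) 0 with he2
  set W : (Fin (m+1) → ℝ) → EuclideanSpace ℝ (Fin (m+1)) :=
    ⇑(MeasurableEquiv.toLp 2 (Fin (m+1) → ℝ)) with hW
  set Ψ : ℝ × (Fin m → ℝ) → EuclideanSpace ℝ (Fin (m+1)) :=
    fun z => B.repr.symm (W (e2.symm z)) with hΨdef
  have hΨmp : MeasurePreserving Ψ (volume : Measure (ℝ × (Fin m → ℝ))) volume := by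
    exact (B.measurePreserving_repr_symm.comp
      ((MeasurePreserving.symm _
          (EuclideanSpace.volume_preserving_symm_measurableEquiv_toLp (Fin (m+1)))).comp
        (MeasurePreserving.symm _
          (volume_preserving_piFinSuccAbove (fun _ : Fin (m+1) => ℝ) 0))))
  have hΨmeas : Measurable Ψ := hΨmp.measurable
  -- structure of Ψ
  have hrepr : ∀ t y, B.repr (Ψ (t, y)) = W (Fin.insertNth 0 t y) := by
    intro t y
    rw [hΨdef]
    simp only [LinearIsometryEquiv.apply_symm_apply]
    congr 1
  have hlineΨ : ∀ t y, Ψ (t, y) = Ψ (0, y) + t • θ := by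
    intro t y
    apply B.repr.injective
    rw [map_add, LinearIsometryEquiv.map_smul, hrepr, hrepr, ← hBθ, B.repr_self]
    ext j
    rw [hW, MeasurableEquiv.coe_toLp]
    induction j using Fin.cases with
    | zero =>
        simp [PiLp.toLp_apply, PiLp.add_apply, PiLp.smul_apply,
          EuclideanSpace.single_apply, Fin.insertNth_apply_same]
    | succ i =>
        have hsa : i.succ = (0 : Fin (m+1)).succAbove i := by simp
        rw [hsa]
        simp [PiLp.toLp_apply, PiLp.add_apply, PiLp.smul_apply,
          EuclideanSpace.single_apply, Fin.insertNth_apply_succAbove, Fin.succAbove_ne]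
  -- the projection
  set π : EuclideanSpace ℝ (Fin (m+1)) → (Fin m → ℝ) :=
    fun x j => B.repr x (Fin.succ j) with hπdef
  have hπΨ : ∀ t y, π (Ψ (t, y)) = y := by
    intro t y
    funext j
    rw [hπdef]
    simp only [hrepr]
    rw [hW]
    rw [MeasurableEquiv.coe_toLp, PiLp.toLp_apply,
      ← Fin.succAbove_zero, Fin.insertNth_apply_succAbove]
  have hπlip : LipschitzWith 1 π := by
    refine LipschitzWith.of_dist_le_mul fun x x' => ?_
    rw [NNReal.coe_one, one_mul]
    rw [dist_pi_le_iff dist_nonneg]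
    intro j
    rw [Real.dist_eq, hπdef]
    have heq : B.repr x (Fin.succ j) - B.repr x' (Fin.succ j)
        = (B.repr x - B.repr x') (Fin.succ j) := by simp
    rw [heq]
    calc |(B.repr x - B.repr x') (Fin.succ j)| ≤ ‖B.repr x - B.repr x'‖ :=
          euclid_abs_apply_le_norm _ _
    _ = ‖B.repr (x - x')‖ := by rw [map_sub]
    _ = ‖x - x'‖ := B.repr.norm_map _
    _ = dist x x' := (dist_eq_norm _ _).symm
  -- a.e. properties of the gradient
  have hgE : ∀ᵐ x ∂ν, g x ∈ E := by
    have hμE : μ ((E : Set (EuclideanSpace ℝ (Fin (m+1))))ᶜ) = 0 :=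
      measure_mono_null (compl_subset_compl.2 hE) hsupp
    have hae1 : ∀ᵐ z ∂μ, z ∈ (E : Set (EuclideanSpace ℝ (Fin (m+1)))) := by
      rw [ae_iff]
      exact hμE
    rw [hμmap] at hae1
    exact ae_of_ae_map hg hae1
  have hperp : ∀ᵐ x ∂ν, (inner ℝ (g x) θ : ℝ) = 0 := by
    filter_upwards [hgE] with x hx
    exact (Submodule.mem_orthogonal E θ).1 hθE (g x) hx
  have hP : ∀ᵐ x ∂ν, ψ x ≠ ⊤ → ∃ w, HasGradientAt f w x ∧ (inner ℝ w θ : ℝ) = 0 := by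
    filter_upwards [hgrad, hperp] with x h1' h2'
    exact fun _ => ⟨g x, h1', h2'⟩
  have hvolP : ∀ᵐ x : EuclideanSpace ℝ (Fin (m+1)), ψ x ≠ ⊤ →
      ∃ w, HasGradientAt f w x ∧ (inner ℝ w θ : ℝ) = 0 := by
    rw [hν] at hP
    have h2 := (ae_withDensity_iff hFmeas).1 hP
    filter_upwards [h2] with x hx hxt
    refine hx ?_ hxt
    simp only [hFdef, ne_eq, EReal.exp_eq_zero_iff, EReal.neg_eq_bot_iff]
    exact hxt
  -- Fubini in the coordinates adapted to θ
  have hswap : MeasurePreserving (Prod.swap : (Fin m → ℝ) × ℝ → ℝ × (Fin m → ℝ))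
      (volume : Measure ((Fin m → ℝ) × ℝ)) (volume : Measure (ℝ × (Fin m → ℝ))) := by
    rw [Measure.volume_eq_prod, Measure.volume_eq_prod]
    exact Measure.measurePreserving_swap
  set Φ : (Fin m → ℝ) × ℝ → EuclideanSpace ℝ (Fin (m+1)) := fun w => Ψ (w.2, w.1) with hΦdef
  have hΦmp : MeasurePreserving Φ (volume : Measure ((Fin m → ℝ) × ℝ)) volume :=
    hΨmp.comp hswap
  have hΦmeas : Measurable Φ := hΦmp.measurable
  set G : (Fin m → ℝ) → ℝ → ℝ≥0∞ := fun y t => F (Ψ (t, y)) with hGdef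
  have hGmeas : Measurable (Function.uncurry G) := by
    have : Function.uncurry G = F ∘ Φ := rfl
    rw [this]; exact hFmeas.comp hΦmeas
  have htot : ∫⁻ y, ∫⁻ t, G y t = ∫⁻ x, F x := by
    rw [← hΦmp.lintegral_comp hFmeas]
    rw [Measure.volume_eq_prod,
      lintegral_prod (fun w : (Fin m → ℝ) × ℝ => F (Φ w))
        ((hFmeas.comp hΦmeas).aemeasurable)]
  set I : (Fin m → ℝ) → ℝ≥0∞ := fun y => ∫⁻ t, G y t with hIdef
  have hImeas : Measurable I := hGmeas.lintegral_prod_right'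
  have haeprod : ∀ᵐ y : Fin m → ℝ, ∀ᵐ t : ℝ, (ψ (Ψ (t, y)) ≠ ⊤ →
      ∃ w, HasGradientAt f w (Ψ (t, y)) ∧ (inner ℝ w θ : ℝ) = 0) := by
    rw [← hΦmp.map_eq] at hvolP
    have h2 := ae_of_ae_map hΦmeas.aemeasurable hvolP
    rw [Measure.volume_eq_prod] at h2
    exact Measure.ae_ae_of_ae_prod h2
  have hfinae : ∀ᵐ y : Fin m → ℝ, I y < ⊤ := by
    refine ae_lt_top hImeas ?_
    have : ∫⁻ y, I y = ∫⁻ x, F x := htot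
    rw [this]
    exact h1.ne
  set Pos : Set (Fin m → ℝ) := {y | 0 < I y} with hPosdef
  have hPosmeas : MeasurableSet Pos := measurableSet_lt measurable_const hImeas
  have hPospos : 0 < volume Pos := by
    by_contra hcon
    push_neg at hcon
    have hPos0 : volume Pos = 0 := le_antisymm (by simpa using hcon) zero_le
    have hI0 : ∀ᵐ y : Fin m → ℝ, I y = 0 := by
      rw [ae_iff]
      refine measure_mono_null ?_ hPos0
      intro y hy
      simp only [mem_setOf_eq] at hy ⊢
      exact pos_iff_ne_zero.2 hy
    have h00 : ∫⁻ y, I y = 0 := (lintegral_eq_zero_iff hImeas).2 hI0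
    rw [htot] at h00
    rw [h00] at h0; exact lt_irrefl _ h0
  set Q : (Fin m → ℝ) → Prop := fun y => I y < ⊤ ∧ ∀ᵐ t : ℝ, (ψ (Ψ (t, y)) ≠ ⊤ →
      ∃ w, HasGradientAt f w (Ψ (t, y)) ∧ (inner ℝ w θ : ℝ) = 0) with hQdef
  have hQae : ∀ᵐ y : Fin m → ℝ, Q y := hfinae.and haeprod
  have hGoodpos : 0 < volume (Pos ∩ {y | Q y}) := by
    have heq : volume (Pos ∩ {y | Q y}) = volume Pos := by
      refine measure_inter_conull ?_
      rw [ae_iff] at hQae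
      simpa [compl_setOf] using hQae
    rw [heq]; exact hPospos
  -- every good y yields a discontinuity point on its line
  have hsub : Pos ∩ {y | Q y} ⊆ π '' Δ := by
    rintro y ⟨hy1, hy2, hy3⟩
    set v : ℝ → EReal := fun t => ψ (Ψ (t, y)) with hvdef
    have hlcont : Continuous (fun t : ℝ => Ψ (t, y)) := by
      have heq2 : (fun t : ℝ => Ψ (t, y)) = fun t => Ψ (0, y) + t • θ :=
        funext fun t => hlineΨ t y
      rw [heq2]
      exact continuous_const.add (continuous_id.smul continuous_const)
    have hvmeas : Measurable v := hψmeas.comp hlcont.measurable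
    have hconv1 : ∀ s t : ℝ, ∀ a b : ℝ, 0 ≤ a → 0 ≤ b → a + b = 1 →
        v (a * s + b * t) ≤ (a : EReal) * v s + (b : EReal) * v t := by
      intro s t a b ha hb hab
      have h2 : a • Ψ (0, y) + b • Ψ (0, y) = Ψ (0, y) := by
        rw [← add_smul, hab, one_smul]
      have hpt : a • Ψ (s, y) + b • Ψ (t, y) = Ψ (a * s + b * t, y) := by
        rw [hlineΨ s y, hlineΨ t y, hlineΨ (a*s+b*t) y]
        rw [smul_add, smul_add, smul_smul, smul_smul]
        conv_rhs => rw [← h2, add_smul]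
        abel
      have h3 := hconv (Ψ (s, y)) (Ψ (t, y)) a b ha hb hab
      rwa [hpt] at h3
    have hae' : ∀ᵐ t : ℝ, v t ≠ ⊤ → HasDerivAt (fun s => (v s).toReal) 0 t := by
      filter_upwards [hy3] with t ht hvt
      obtain ⟨w, hw1, hw2⟩ := ht hvt
      rw [hlineΨ t y] at hw1
      have hd := hasDerivAt_line hw1 hw2
      have heq3 : (fun s : ℝ => f (Ψ (0, y) + s • θ)) = fun s => (v s).toReal := by
        funext s
        rw [← hlineΨ s y]
      rwa [heq3] at hd
    obtain ⟨b₀, hb₀⟩ := line_discont v (fun t => hbot _) hconv1 hvmeas hy2 hy1 hae'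
    refine ⟨Ψ (b₀, y), ?_, hπΨ b₀ y⟩
    intro hcont
    exact hb₀ (ContinuousAt.comp (x := b₀) hcont hlcont.continuousAt)
  -- Hausdorff measure contradiction
  have hd1 : ((m + 1 : ℕ) : ℝ) - 1 = ((m : ℕ) : ℝ) := by push_cast; ring
  rw [hd1] at hΔ0
  have himg : μH[((m : ℕ) : ℝ)] (π '' Δ) = 0 := by
    have hle := hπlip.hausdorffMeasure_image_le
      (by positivity : (0:ℝ) ≤ ((m : ℕ) : ℝ)) Δ
    rw [hΔ0] at hle
    simpa using hle
  have hvol0 : volume (π '' Δ) = 0 := by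
    have hcard : (volume : Measure (Fin m → ℝ)) = μH[((m : ℕ) : ℝ)] := by
      have h4 := (hausdorffMeasure_pi_real (ι := Fin m)).symm
      simpa using h4
    rw [hcard]
    exact himg
  have hfin2 : volume (Pos ∩ {y | Q y}) ≤ volume (π '' Δ) := measure_mono hsub
  rw [hvol0] at hfin2
  exact absurd (le_antisymm hfin2 zero_le) (ne_of_gt hGoodpos)


end MomentHelpers

/-- the support of the moment measure of an essentially-continuous convex
function (with `0 < ∫ e^{-ψ} < ∞`) is not contained in any proper linear subspace. -/
theorem moment_measure_support_not_in_proper_subspace {n : ℕ}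
    (ψ : EuclideanSpace ℝ (Fin n) → EReal) (hbot : ∀ x, ψ x ≠ ⊥)
    (hconv : ERealConvexOn ψ) (hec : EssentiallyContinuous ψ)
    (h0 : 0 < ∫⁻ x, (-ψ x).exp) (h1 : (∫⁻ x, (-ψ x).exp) < ⊤)
    (μ : MeasureTheory.Measure (EuclideanSpace ℝ (Fin n)))
    (hμ : IsMomentMeasure ψ μ) :
    ∀ E : Submodule ℝ (EuclideanSpace ℝ (Fin n)),
      measureSupport μ ⊆ (E : Set (EuclideanSpace ℝ (Fin n))) → E = ⊤ := by
  obtain ⟨g, hg, hgrad, hμmap⟩ := hμ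
  exact moment_aux ψ hbot hconv hec.1 hec.2 h0 h1 μ g hg hgrad hμmap (mm_null_compl μ)
end

section
/- Let ψ: ℝⁿ → ℝ ∪ {+∞} be a convex function with 0 < ∫ e^{-ψ} < +∞. Then ψ is integrable with respect to the measure μ_ψ with density e^{-ψ}: one has −∞ < ∫_{ℝⁿ} ψ(x) e^{-ψ(x)} dx ≤ 2 ∫_{ℝⁿ} e^{-ψ(x)/2} dx < +∞; in particular ∫_{ℝⁿ} |ψ(x)| e^{-ψ(x)} dx < +∞. -/
open MeasureTheory Filter
open scoped ENNReal Topology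

section AuxLemmas

open MeasureTheory Set
open scoped ENNReal

namespace PsiExpAux

variable {n : ℕ}

instance : MeasureTheory.Measure.IsAddHaarMeasure
    (volume : Measure (EuclideanSpace ℝ (Fin n))) := by
  rw [← (EuclideanSpace.basisFun (Fin n) ℝ).addHaar_eq_volume]; infer_instance

theorem real_key {t : ℝ} : t * Real.exp (-t) ≤ 2 * Real.exp (2⁻¹ * -t) := by
  have e1 : Real.exp (-t) = Real.exp (2⁻¹ * -t) * Real.exp (2⁻¹ * -t) := by
    rw [← Real.exp_add]; ring_nf
  have e2 : t * Real.exp (2⁻¹ * -t) ≤ 2 := by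
    have h1 := Real.add_one_le_exp (t / 2)
    have h3 : Real.exp (t / 2) * Real.exp (2⁻¹ * -t) = 1 := by
      rw [← Real.exp_add]; ring_nf; exact Real.exp_zero
    nlinarith [Real.exp_pos (2⁻¹ * -t), Real.exp_pos (t / 2)]
  nlinarith [Real.exp_pos (2⁻¹ * -t)]

theorem real_key_abs {m t : ℝ} (hmt : m ≤ t) :
    |t| * Real.exp (-t) ≤ 2 * Real.exp (2⁻¹ * -t) + |m| * Real.exp (-t) := by
  rcases le_or_gt 0 t with h | h
  · rw [abs_of_nonneg h]
    have := real_key (t := t)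
    nlinarith [Real.exp_pos (-t), abs_nonneg m, mul_nonneg (abs_nonneg m) (Real.exp_pos (-t)).le]
  · rw [abs_of_neg h]
    have h2 : -t ≤ |m| := by
      rcases abs_cases m with ⟨h1, h2⟩ | ⟨h1, h2⟩ <;> linarith
    nlinarith [Real.exp_pos (-t), Real.exp_pos (2⁻¹ * -t)]

theorem sublevel_convex (ψ : EuclideanSpace ℝ (Fin n) → EReal) (hbot : ∀ x, ψ x ≠ ⊥)
    (hconv : ERealConvexOn ψ) (c : EReal) : Convex ℝ {x | ψ x ≤ c} := by
  induction c with
  | bot =>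
    have : {x | ψ x ≤ (⊥ : EReal)} = ∅ := by
      ext x; simp [le_bot_iff, hbot x]
    rw [this]; exact convex_empty
  | coe c =>
    intro x hx y hy a b ha hb hab
    simp only [mem_setOf_eq] at hx hy ⊢
    have hxt : ψ x ≠ ⊤ := fun h => by rw [h] at hx; exact absurd hx (by simp)
    have hyt : ψ y ≠ ⊤ := fun h => by rw [h] at hy; exact absurd hy (by simp)
    have hs : ψ x = ((ψ x).toReal : EReal) := (EReal.coe_toReal hxt (hbot x)).symm
    have ht : ψ y = ((ψ y).toReal : EReal) := (EReal.coe_toReal hyt (hbot y)).symm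
    set s := (ψ x).toReal
    set t := (ψ y).toReal
    have hsc : s ≤ c := by rw [hs] at hx; exact_mod_cast hx
    have htc : t ≤ c := by rw [ht] at hy; exact_mod_cast hy
    calc ψ (a • x + b • y) ≤ (a : EReal) * ψ x + (b : EReal) * ψ y :=
          hconv x y a b ha hb hab
      _ = ((a * s + b * t : ℝ) : EReal) := by rw [hs, ht]; push_cast; ring_nf
      _ ≤ (c : EReal) := by
          apply EReal.coe_le_coe_iff.mpr
          have habc : a * c + b * c = c := by rw [← add_mul, hab, one_mul]
          have h1 := mul_le_mul_of_nonneg_left hsc ha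
          have h2 := mul_le_mul_of_nonneg_left htc hb
          linarith
  | top =>
    have : {x | ψ x ≤ (⊤ : EReal)} = univ := by ext x; simp
    rw [this]; exact convex_univ

theorem psi_aemeasurable (ψ : EuclideanSpace ℝ (Fin n) → EReal) (hbot : ∀ x, ψ x ≠ ⊥)
    (hconv : ERealConvexOn ψ) : AEMeasurable ψ (volume : Measure (EuclideanSpace ℝ (Fin n))) := by
  have hnm : NullMeasurable ψ (volume : Measure (EuclideanSpace ℝ (Fin n))) :=
    measurable_of_Iic (α := EReal)
      (δ := NullMeasurableSpace (EuclideanSpace ℝ (Fin n)) volume)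
      (fun c => Convex.nullMeasurableSet (μ := (volume : Measure (EuclideanSpace ℝ (Fin n)))) (sublevel_convex ψ hbot hconv c))
  exact hnm.aemeasurable

/-- Change of variables `x ↦ 2⁻¹ • x + 2⁻¹ • y`. -/
theorem lintegral_half_smul (g : EuclideanSpace ℝ (Fin n) → ℝ≥0∞) (y : EuclideanSpace ℝ (Fin n)) :
    ∫⁻ x, g ((2:ℝ)⁻¹ • x + (2:ℝ)⁻¹ • y) =
      ENNReal.ofReal ((2:ℝ) ^ n) * ∫⁻ x, g x := by
  set e : EuclideanSpace ℝ (Fin n) ≃ᵐ EuclideanSpace ℝ (Fin n) :=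
    ((Homeomorph.smulOfNeZero ((2:ℝ)⁻¹) (by norm_num)).trans
      (Homeomorph.addRight ((2:ℝ)⁻¹ • y))).toMeasurableEquiv with he
  have hco : (⇑e) = (fun z : EuclideanSpace ℝ (Fin n) => z + (2:ℝ)⁻¹ • y) ∘
      (fun x : EuclideanSpace ℝ (Fin n) => (2:ℝ)⁻¹ • x) := rfl
  have hmap : (volume : Measure (EuclideanSpace ℝ (Fin n))).map e =
      ENNReal.ofReal ((2:ℝ) ^ n) • volume := by
    rw [hco, ← Measure.map_map (measurable_add_const _) (measurable_const_smul _)]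
    have h1 : Measure.map (fun x : EuclideanSpace ℝ (Fin n) => (2:ℝ)⁻¹ • x) volume =
        ENNReal.ofReal ((2:ℝ) ^ n) • volume := by
      rw [show (fun x : EuclideanSpace ℝ (Fin n) => (2:ℝ)⁻¹ • x) = (((2:ℝ)⁻¹) • ·) from rfl,
        Measure.map_addHaar_smul (μ := volume) (by norm_num : ((2:ℝ)⁻¹) ≠ 0)]
      congr 1
      rw [finrank_euclideanSpace_fin]
      rw [show (((2:ℝ)⁻¹) ^ n)⁻¹ = (2:ℝ) ^ n by rw [← inv_pow]; norm_num]
      rw [abs_of_pos (by positivity)]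
    rw [h1, Measure.map_smul, map_add_right_eq_self]
  calc ∫⁻ x, g ((2:ℝ)⁻¹ • x + (2:ℝ)⁻¹ • y) = ∫⁻ x, g (e x) := by rfl
    _ = ∫⁻ z, g z ∂((volume : Measure (EuclideanSpace ℝ (Fin n))).map e) :=
        (MeasureTheory.lintegral_map_equiv g e).symm
    _ = ENNReal.ofReal ((2:ℝ) ^ n) * ∫⁻ x, g x := by
        rw [hmap, lintegral_smul_measure, smul_eq_mul]

end PsiExpAux

end AuxLemmas
section AuxLemmas2

open MeasureTheory Set
open scoped ENNReal

namespace PsiExpAux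

variable {n : ℕ}

theorem exp_half_top {z : EReal} (hz : z = ⊤) :
    (((2:ℝ)⁻¹ : EReal) * (-z)).exp = 0 := by
  rw [show ((2:ℝ)⁻¹ : EReal) = ((2⁻¹ : ℝ) : EReal) from rfl]
  rw [hz, EReal.neg_top, EReal.coe_mul_bot_of_pos (by norm_num : (0:ℝ) < 2⁻¹), EReal.exp_bot]

theorem exp_half_coe {t : ℝ} :
    (((2:ℝ)⁻¹ : EReal) * (-(t : EReal))).exp = ENNReal.ofReal (Real.exp (2⁻¹ * -t)) := by
  rw [show ((2:ℝ)⁻¹ : EReal) = ((2⁻¹ : ℝ) : EReal) from rfl]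
  rw [show ((2⁻¹ : ℝ) : EReal) * (-(t : EReal)) = ((2⁻¹ * -t : ℝ) : EReal) by
      rw [← EReal.coe_neg, ← EReal.coe_mul],
    EReal.exp_coe]

theorem mid_le (ψ : EuclideanSpace ℝ (Fin n) → EReal) (hconv : ERealConvexOn ψ)
    {y : EuclideanSpace ℝ (Fin n)} {d t : ℝ} (hd : ψ y = (d : EReal))
    {x : EuclideanSpace ℝ (Fin n)} (ht : ψ x = (t : EReal)) :
    ψ ((2:ℝ)⁻¹ • x + (2:ℝ)⁻¹ • y) ≤ (((t + d) / 2 : ℝ) : EReal) := by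
  have hmid := hconv x y 2⁻¹ 2⁻¹ (by norm_num) (by norm_num) (by norm_num)
  rw [ht, hd] at hmid
  refine hmid.trans_eq ?_
  rw [← EReal.coe_mul, ← EReal.coe_mul, ← EReal.coe_add]
  exact congrArg Real.toEReal (by ring)

theorem exp_neg_mid (ψ : EuclideanSpace ℝ (Fin n) → EReal) (hconv : ERealConvexOn ψ)
    {y : EuclideanSpace ℝ (Fin n)} {d t : ℝ} (hd : ψ y = (d : EReal))
    {x : EuclideanSpace ℝ (Fin n)} (ht : ψ x = (t : EReal)) :
    ENNReal.ofReal (Real.exp (-(t + d) / 2)) ≤ (-ψ ((2:ℝ)⁻¹ • x + (2:ℝ)⁻¹ • y)).exp := by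
  rw [show ENNReal.ofReal (Real.exp (-(t + d) / 2))
      = EReal.exp (((-(t + d) / 2 : ℝ)) : EReal) from (EReal.exp_coe _).symm]
  apply EReal.exp_monotone
  rw [show ((-(t + d) / 2 : ℝ) : EReal) = -(((t + d) / 2 : ℝ) : EReal) by
    rw [← EReal.coe_neg]; exact congrArg Real.toEReal (by ring)]
  exact EReal.neg_le_neg_iff.mpr (mid_le ψ hconv hd ht)

theorem key_upper (ψ : EuclideanSpace ℝ (Fin n) → EReal) (hbot : ∀ x, ψ x ≠ ⊥)
    (hconv : ERealConvexOn ψ) {x₀ : EuclideanSpace ℝ (Fin n)} {c : ℝ}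
    (hc : ψ x₀ = (c : EReal)) (x : EuclideanSpace ℝ (Fin n)) :
    (((2:ℝ)⁻¹ : EReal) * (-ψ x)).exp ≤
      ENNReal.ofReal (Real.exp (c / 2)) * (-ψ ((2:ℝ)⁻¹ • x + (2:ℝ)⁻¹ • x₀)).exp := by
  by_cases hxt : ψ x = ⊤
  · rw [exp_half_top hxt]; exact zero_le
  · have ht : ψ x = (((ψ x).toReal : ℝ) : EReal) := (EReal.coe_toReal hxt (hbot x)).symm
    set t := (ψ x).toReal with htdef
    rw [ht, exp_half_coe]
    calc ENNReal.ofReal (Real.exp (2⁻¹ * -t))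
        = ENNReal.ofReal (Real.exp (c / 2)) * ENNReal.ofReal (Real.exp (-(t + c) / 2)) := by
          rw [← ENNReal.ofReal_mul (Real.exp_nonneg _), ← Real.exp_add,
            show c / 2 + -(t + c) / 2 = 2⁻¹ * -t by ring]
      _ ≤ _ := mul_le_mul_right (exp_neg_mid ψ hconv hc ht) _

theorem key_lower (ψ : EuclideanSpace ℝ (Fin n) → EReal) (hbot : ∀ x, ψ x ≠ ⊥)
    (hconv : ERealConvexOn ψ) {y : EuclideanSpace ℝ (Fin n)} {d : ℝ}
    (hd : ψ y = (d : EReal)) (x : EuclideanSpace ℝ (Fin n)) :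
    ENNReal.ofReal (Real.exp (-d / 2)) * (((2:ℝ)⁻¹ : EReal) * (-ψ x)).exp ≤
      (-ψ ((2:ℝ)⁻¹ • x + (2:ℝ)⁻¹ • y)).exp := by
  by_cases hxt : ψ x = ⊤
  · rw [exp_half_top hxt, mul_zero]; exact zero_le
  · have ht : ψ x = (((ψ x).toReal : ℝ) : EReal) := (EReal.coe_toReal hxt (hbot x)).symm
    set t := (ψ x).toReal with htdef
    rw [ht, exp_half_coe]
    calc ENNReal.ofReal (Real.exp (-d / 2)) * ENNReal.ofReal (Real.exp (2⁻¹ * -t))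
        = ENNReal.ofReal (Real.exp (-(t + d) / 2)) := by
          rw [← ENNReal.ofReal_mul (Real.exp_nonneg _), ← Real.exp_add,
            show -d / 2 + 2⁻¹ * -t = -(t + d) / 2 by ring]
      _ ≤ _ := exp_neg_mid ψ hconv hd ht

theorem half_antitone : Antitone (fun z : EReal => (((2:ℝ)⁻¹ : EReal) * (-z)).exp) := by
  intro z w h
  refine EReal.exp_monotone (mul_le_mul_of_nonneg_left (EReal.neg_le_neg_iff.mpr h) ?_)
  rw [show ((2:ℝ)⁻¹ : EReal) = ((2⁻¹ : ℝ) : EReal) from rfl]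
  exact EReal.coe_nonneg.mpr (by norm_num)

theorem J_pos (ψ : EuclideanSpace ℝ (Fin n) → EReal) (hbot : ∀ x, ψ x ≠ ⊥)
    (hconv : ERealConvexOn ψ) (h0 : 0 < ∫⁻ x, (-ψ x).exp) :
    0 < ∫⁻ x, (((2:ℝ)⁻¹ : EReal) * (-ψ x)).exp := by
  rw [pos_iff_ne_zero]
  intro hJ
  have hmeas : AEMeasurable (fun x => (((2:ℝ)⁻¹ : EReal) * (-ψ x)).exp) volume :=
    half_antitone.measurable.comp_aemeasurable (psi_aemeasurable ψ hbot hconv)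
  have hae := (lintegral_eq_zero_iff' hmeas).mp hJ
  have hz : (fun x => (-ψ x).exp) =ᵐ[volume] 0 := by
    filter_upwards [hae] with x hx
    simp only [Pi.zero_apply] at hx ⊢
    have hxt : ψ x = ⊤ := by
      by_contra hxt
      have ht : ψ x = (((ψ x).toReal : ℝ) : EReal) := (EReal.coe_toReal hxt (hbot x)).symm
      rw [ht, exp_half_coe] at hx
      exact absurd (ENNReal.ofReal_eq_zero.mp hx) (not_le.mpr (Real.exp_pos _))
    rw [hxt, EReal.neg_top, EReal.exp_bot]
  have hI0 : (∫⁻ x, (-ψ x).exp) = 0 := by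
    rw [lintegral_congr_ae hz]; simp
  rw [hI0] at h0
  exact lt_irrefl 0 h0

theorem bdd_below (ψ : EuclideanSpace ℝ (Fin n) → EReal) (hbot : ∀ x, ψ x ≠ ⊥)
    (hconv : ERealConvexOn ψ) (h1 : (∫⁻ x, (-ψ x).exp) < ⊤)
    (hJ0 : 0 < ∫⁻ x, (((2:ℝ)⁻¹ : EReal) * (-ψ x)).exp)
    (hJ1 : (∫⁻ x, (((2:ℝ)⁻¹ : EReal) * (-ψ x)).exp) < ⊤) :
    ∃ m : ℝ, ∀ x, (m : EReal) ≤ ψ x := by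
  by_contra hcon
  push_neg at hcon
  set J := ∫⁻ x, (((2:ℝ)⁻¹ : EReal) * (-ψ x)).exp with hJdef
  set K := ENNReal.ofReal ((2:ℝ) ^ n) * ∫⁻ x, (-ψ x).exp with hKdef
  have hKne : K ≠ ⊤ := (ENNReal.mul_lt_top ENNReal.ofReal_lt_top h1).ne
  have key : ∀ M : ℝ, ENNReal.ofReal (Real.exp (M / 2)) * J ≤ K := by
    intro M
    obtain ⟨y, hy⟩ := hcon (-M)
    have hyt : ψ y ≠ ⊤ := (hy.trans (EReal.coe_lt_top _)).ne
    have hd : ψ y = (((ψ y).toReal : ℝ) : EReal) := (EReal.coe_toReal hyt (hbot y)).symm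
    set d := (ψ y).toReal with hddef
    have hdM : d < -M := by rw [hd] at hy; exact_mod_cast hy
    calc ENNReal.ofReal (Real.exp (M / 2)) * J
        ≤ ENNReal.ofReal (Real.exp (-d / 2)) * J :=
          mul_le_mul_left (ENNReal.ofReal_le_ofReal
            (Real.exp_le_exp.mpr (by linarith))) _
      _ = ∫⁻ x, ENNReal.ofReal (Real.exp (-d / 2)) * (((2:ℝ)⁻¹ : EReal) * (-ψ x)).exp :=
          (lintegral_const_mul' _ _ ENNReal.ofReal_ne_top).symm
      _ ≤ ∫⁻ x, (-ψ ((2:ℝ)⁻¹ • x + (2:ℝ)⁻¹ • y)).exp :=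
          lintegral_mono (key_lower ψ hbot hconv hd)
      _ = K := lintegral_half_smul (fun u => (-ψ u).exp) y
  have hfin : K / J ≠ ⊤ := (ENNReal.div_lt_top hKne hJ0.ne').ne
  set r := (K / J).toReal with hrdef
  have hdiv : ENNReal.ofReal (Real.exp ((2 * Real.log (r + 1)) / 2)) ≤ K / J :=
    (ENNReal.le_div_iff_mul_le (Or.inl hJ0.ne') (Or.inl hJ1.ne)).mpr (key _)
  have h2 := (ENNReal.ofReal_le_iff_le_toReal hfin).mp hdiv
  rw [show (2 * Real.log (r + 1)) / 2 = Real.log (r + 1) by ring,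
    Real.exp_log (by positivity)] at h2
  rw [← hrdef] at h2
  linarith

end PsiExpAux

end AuxLemmas2
/-- for a convex `ψ` with `0 < ∫ e^{-ψ} < ∞`, the function `ψ e^{-ψ}` is
integrable, `-∞ < ∫ ψ e^{-ψ} ≤ 2 ∫ e^{-ψ/2} < +∞`, and `∫ |ψ| e^{-ψ} < ∞`. -/
theorem psi_exp_neg_psi_integrable {n : ℕ}
    (ψ : EuclideanSpace ℝ (Fin n) → EReal) (hbot : ∀ x, ψ x ≠ ⊥)
    (hconv : ERealConvexOn ψ)
    (h0 : 0 < ∫⁻ x, (-ψ x).exp) (h1 : (∫⁻ x, (-ψ x).exp) < ⊤) :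
    MeasureTheory.Integrable
      (fun x => (ψ x).toReal * ((-ψ x).exp).toReal) MeasureTheory.volume ∧
    (∫⁻ x, ((((2:ℝ)⁻¹ : EReal)) * (-ψ x)).exp) < ⊤ ∧
    (∫ x, (ψ x).toReal * ((-ψ x).exp).toReal)
      ≤ 2 * (∫⁻ x, ((((2:ℝ)⁻¹ : EReal)) * (-ψ x)).exp).toReal ∧
    MeasureTheory.Integrable
      (fun x => |(ψ x).toReal| * ((-ψ x).exp).toReal) MeasureTheory.volume := by
  classical
  have hψm := PsiExpAux.psi_aemeasurable ψ hbot hconv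
  -- a point where ψ is finite
  have hx₀ : ∃ x₀, ψ x₀ ≠ ⊤ := by
    by_contra hno
    push_neg at hno
    have hzero : (fun x : EuclideanSpace ℝ (Fin n) => (-ψ x).exp) = fun _ => 0 :=
      funext fun x => by rw [hno x, EReal.neg_top, EReal.exp_bot]
    rw [hzero, lintegral_const, zero_mul] at h0
    exact lt_irrefl 0 h0
  obtain ⟨x₀, hx₀t⟩ := hx₀
  have hc : ψ x₀ = (((ψ x₀).toReal : ℝ) : EReal) := (EReal.coe_toReal hx₀t (hbot x₀)).symm
  set c := (ψ x₀).toReal with hcdef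
  -- Part 2: finiteness of the half-integral
  have hJle : (∫⁻ x, (((2:ℝ)⁻¹ : EReal) * (-ψ x)).exp)
      ≤ ENNReal.ofReal (Real.exp (c / 2)) * (ENNReal.ofReal ((2:ℝ) ^ n) * ∫⁻ x, (-ψ x).exp) :=
    calc (∫⁻ x, (((2:ℝ)⁻¹ : EReal) * (-ψ x)).exp)
        ≤ ∫⁻ x, ENNReal.ofReal (Real.exp (c / 2)) *
            (-ψ ((2:ℝ)⁻¹ • x + (2:ℝ)⁻¹ • x₀)).exp :=
          lintegral_mono (PsiExpAux.key_upper ψ hbot hconv hc)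
      _ = ENNReal.ofReal (Real.exp (c / 2)) *
            ∫⁻ x, (-ψ ((2:ℝ)⁻¹ • x + (2:ℝ)⁻¹ • x₀)).exp :=
          lintegral_const_mul' _ _ ENNReal.ofReal_ne_top
      _ = _ := by rw [PsiExpAux.lintegral_half_smul (fun u => (-ψ u).exp) x₀]
  have hJ1 : (∫⁻ x, (((2:ℝ)⁻¹ : EReal) * (-ψ x)).exp) < ⊤ :=
    hJle.trans_lt (ENNReal.mul_lt_top ENNReal.ofReal_lt_top
      (ENNReal.mul_lt_top ENNReal.ofReal_lt_top h1))
  have hJ0 := PsiExpAux.J_pos ψ hbot hconv h0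
  obtain ⟨m, hm⟩ := PsiExpAux.bdd_below ψ hbot hconv h1 hJ0 hJ1
  -- measurability
  have hnegm : Measurable (fun z : EReal => -z) :=
    Antitone.measurable (fun _ _ h => EReal.neg_le_neg_iff.mpr h)
  have hexpm : AEMeasurable (fun x => (-ψ x).exp) volume :=
    (EReal.measurable_exp.comp hnegm).comp_aemeasurable hψm
  have hexp2m : AEMeasurable (fun x => (((2:ℝ)⁻¹ : EReal) * (-ψ x)).exp) volume :=
    PsiExpAux.half_antitone.measurable.comp_aemeasurable hψm
  have hFm : AEStronglyMeasurable
      (fun x => (ψ x).toReal * ((-ψ x).exp).toReal) volume :=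
    (hψm.ereal_toReal.mul (ENNReal.measurable_toReal.comp_aemeasurable hexpm)).aestronglyMeasurable
  have hGm : AEStronglyMeasurable
      (fun x => |(ψ x).toReal| * ((-ψ x).exp).toReal) volume :=
    ((continuous_abs.measurable.comp_aemeasurable hψm.ereal_toReal).mul
      (ENNReal.measurable_toReal.comp_aemeasurable hexpm)).aestronglyMeasurable
  -- pointwise bound for |ψ| e^{-ψ}
  have hptG : ∀ x, ENNReal.ofReal (|(ψ x).toReal| * ((-ψ x).exp).toReal)
      ≤ 2 * (((2:ℝ)⁻¹ : EReal) * (-ψ x)).exp + ENNReal.ofReal |m| * (-ψ x).exp := by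
    intro x
    by_cases hxt : ψ x = ⊤
    · simp [hxt, EReal.neg_top]
    · have ht : ψ x = (((ψ x).toReal : ℝ) : EReal) := (EReal.coe_toReal hxt (hbot x)).symm
      have hmt : m ≤ (ψ x).toReal := by
        have h := hm x
        rw [ht] at h
        exact_mod_cast h
      set t := (ψ x).toReal with htdef
      rw [ht, PsiExpAux.exp_half_coe, ← EReal.coe_neg, EReal.exp_coe,
        ENNReal.toReal_ofReal (Real.exp_nonneg _)]
      rw [show (2 : ℝ≥0∞) = ENNReal.ofReal (2 : ℝ) by norm_num,
        ← ENNReal.ofReal_mul (by norm_num : (0:ℝ) ≤ 2),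
        ← ENNReal.ofReal_mul (abs_nonneg m),
        ← ENNReal.ofReal_add (by positivity) (by positivity)]
      exact ENNReal.ofReal_le_ofReal (PsiExpAux.real_key_abs hmt)
  -- Part 4: integrability of |ψ| e^{-ψ}
  have hGint : MeasureTheory.Integrable
      (fun x => |(ψ x).toReal| * ((-ψ x).exp).toReal) volume := by
    refine ⟨hGm, ?_⟩
    rw [hasFiniteIntegral_iff_ofReal (ae_of_all _ fun x => by positivity)]
    calc (∫⁻ x, ENNReal.ofReal (|(ψ x).toReal| * ((-ψ x).exp).toReal))
        ≤ ∫⁻ x, (2 * (((2:ℝ)⁻¹ : EReal) * (-ψ x)).exp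
            + ENNReal.ofReal |m| * (-ψ x).exp) := lintegral_mono hptG
      _ = 2 * (∫⁻ x, (((2:ℝ)⁻¹ : EReal) * (-ψ x)).exp)
            + ENNReal.ofReal |m| * ∫⁻ x, (-ψ x).exp := by
          rw [lintegral_add_left' (hexp2m.const_mul 2),
            lintegral_const_mul' _ _ (by norm_num : (2:ℝ≥0∞) ≠ ⊤),
            lintegral_const_mul' _ _ ENNReal.ofReal_ne_top]
      _ < ⊤ := ENNReal.add_lt_top.mpr
          ⟨ENNReal.mul_lt_top (by norm_num) hJ1,
           ENNReal.mul_lt_top ENNReal.ofReal_lt_top h1⟩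
  -- Part 1: integrability of ψ e^{-ψ}
  have hFint : MeasureTheory.Integrable
      (fun x => (ψ x).toReal * ((-ψ x).exp).toReal) volume := by
    refine hGint.mono hFm (ae_of_all _ fun x => ?_)
    simp only [Real.norm_eq_abs, abs_mul, abs_abs]
    exact le_of_eq rfl
  -- Part 3: the inequality
  have hHint : MeasureTheory.Integrable
      (fun x => ((((2:ℝ)⁻¹ : EReal)) * (-ψ x)).exp.toReal) volume :=
    integrable_toReal_of_lintegral_ne_top hexp2m hJ1.ne
  have hHlt : ∀ x, ((((2:ℝ)⁻¹ : EReal)) * (-ψ x)).exp < ⊤ := by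
    intro x
    by_cases hxt : ψ x = ⊤
    · rw [PsiExpAux.exp_half_top hxt]; exact ENNReal.zero_lt_top
    · have ht : ψ x = (((ψ x).toReal : ℝ) : EReal) := (EReal.coe_toReal hxt (hbot x)).symm
      rw [ht, PsiExpAux.exp_half_coe]
      exact ENNReal.ofReal_lt_top
  have hintH : (∫ x, ((((2:ℝ)⁻¹ : EReal)) * (-ψ x)).exp.toReal)
      = (∫⁻ x, ((((2:ℝ)⁻¹ : EReal)) * (-ψ x)).exp).toReal :=
    integral_toReal hexp2m (ae_of_all _ hHlt)
  have hptF : ∀ x, (ψ x).toReal * ((-ψ x).exp).toReal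
      ≤ 2 * ((((2:ℝ)⁻¹ : EReal)) * (-ψ x)).exp.toReal := by
    intro x
    by_cases hxt : ψ x = ⊤
    · rw [hxt]
      simp only [EReal.toReal_top, zero_mul]
      positivity
    · have ht : ψ x = (((ψ x).toReal : ℝ) : EReal) := (EReal.coe_toReal hxt (hbot x)).symm
      set t := (ψ x).toReal with htdef
      rw [ht, PsiExpAux.exp_half_coe, ← EReal.coe_neg, EReal.exp_coe,
        ENNReal.toReal_ofReal (Real.exp_nonneg _), ENNReal.toReal_ofReal (Real.exp_nonneg _)]
      exact PsiExpAux.real_key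
  have hineq : (∫ x, (ψ x).toReal * ((-ψ x).exp).toReal)
      ≤ 2 * (∫⁻ x, ((((2:ℝ)⁻¹ : EReal)) * (-ψ x)).exp).toReal :=
    calc (∫ x, (ψ x).toReal * ((-ψ x).exp).toReal)
        ≤ ∫ x, 2 * ((((2:ℝ)⁻¹ : EReal)) * (-ψ x)).exp.toReal :=
          integral_mono hFint (hHint.const_mul 2) hptF
      _ = 2 * ∫ x, ((((2:ℝ)⁻¹ : EReal)) * (-ψ x)).exp.toReal := integral_const_mul 2 _
      _ = _ := by rw [hintH]
  exact ⟨hFint, hJ1, hineq, hGint⟩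
end

section
/- Let μ be a finite Borel measure on ℝⁿ and let K be the interior of the convex hull of the support of μ. If x₀ ∈ K, then there exists a constant C_{μ,x₀} > 0 with the following property: for every non-negative, μ-integrable convex function φ: ℝⁿ → ℝ ∪ {+∞}, one has φ(x₀) ≤ C_{μ,x₀} ∫_{ℝⁿ} φ dμ. -/
open MeasureTheory Filter
open scoped ENNReal Topology

open scoped RealInnerProductSpace

section AuxLemmas
variable {n : ℕ}

lemma aux_halfspace_pos (μ : Measure (EuclideanSpace ℝ (Fin n))) (x₀ : EuclideanSpace ℝ (Fin n))
    (hx₀ : x₀ ∈ interior (convexHull ℝ (measureSupport μ)))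
    (u : EuclideanSpace ℝ (Fin n)) (hu : u ≠ 0) :
    0 < μ {x | 0 < ⟪u, x - x₀⟫} := by
  by_contra h
  have hz : μ {x | 0 < ⟪u, x - x₀⟫} = 0 := le_zero_iff.mp (not_lt.mp h)
  have hcont : Continuous fun x : EuclideanSpace ℝ (Fin n) => ⟪u, x - x₀⟫ :=
    continuous_const.inner (continuous_id.sub continuous_const)
  have hopen : IsOpen {x : EuclideanSpace ℝ (Fin n) | 0 < ⟪u, x - x₀⟫} :=
    isOpen_lt continuous_const hcont
  have hsub : measureSupport μ ⊆ {x : EuclideanSpace ℝ (Fin n) | ⟪u, x⟫ ≤ ⟪u, x₀⟫} := by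
    intro x hx
    by_contra hlt
    simp only [Set.mem_setOf_eq, not_le] at hlt
    have hxH : x ∈ {x : EuclideanSpace ℝ (Fin n) | 0 < ⟪u, x - x₀⟫} := by
      simp only [Set.mem_setOf_eq, inner_sub_right]; linarith
    have := hx _ hopen hxH
    rw [hz] at this; exact lt_irrefl 0 this
  have hconv : Convex ℝ {x : EuclideanSpace ℝ (Fin n) | ⟪u, x⟫ ≤ ⟪u, x₀⟫} :=
    convex_halfSpace_le ⟨fun x y => inner_add_right u x y,
      fun c x => by rw [real_inner_smul_right, smul_eq_mul]⟩ _
  have h2 : x₀ ∈ interior {x : EuclideanSpace ℝ (Fin n) | ⟪u, x⟫ ≤ ⟪u, x₀⟫} :=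
    interior_mono (convexHull_min hsub hconv) hx₀
  have hmem : {x : EuclideanSpace ℝ (Fin n) | ⟪u, x⟫ ≤ ⟪u, x₀⟫} ∈ 𝓝 x₀ :=
    mem_interior_iff_mem_nhds.mp h2
  have htends : Tendsto (fun t : ℝ => x₀ + t • u) (𝓝[>] (0:ℝ)) (𝓝 x₀) := by
    have hc : Continuous fun t : ℝ => x₀ + t • u :=
      continuous_const.add (continuous_id.smul continuous_const)
    have := hc.tendsto 0
    simp only [zero_smul, add_zero] at this
    exact this.mono_left nhdsWithin_le_nhds
  have hev : ∀ᶠ t in 𝓝[>] (0:ℝ), (x₀ + t • u) ∈ {x : EuclideanSpace ℝ (Fin n) | ⟪u, x⟫ ≤ ⟪u, x₀⟫} :=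
    htends hmem
  obtain ⟨t, ht1, ht2⟩ := (hev.and (eventually_mem_nhdsWithin)).exists
  simp only [Set.mem_setOf_eq, inner_add_right, real_inner_smul_right,
    real_inner_self_eq_norm_sq] at ht1
  have hn : 0 < ‖u‖ := norm_pos_iff.mpr hu
  have ht2' : (0:ℝ) < t := ht2
  nlinarith [mul_pos ht2' (pow_pos hn 2)]

lemma aux_sep (S : Set (EuclideanSpace ℝ (Fin n))) (hS : Convex ℝ S)
    (x₀ : EuclideanSpace ℝ (Fin n)) (hx : x₀ ∉ S) (hne : S.Nonempty) :
    ∃ u : EuclideanSpace ℝ (Fin n), u ≠ 0 ∧ ∀ x ∈ S, ⟪u, x - x₀⟫ ≤ 0 := by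
  by_cases hi : (interior S).Nonempty
  · obtain ⟨a, ha⟩ := hi
    have hx' : x₀ ∉ interior S := fun h => hx (interior_subset h)
    obtain ⟨f, hf⟩ := geometric_hahn_banach_open_point hS.interior isOpen_interior hx'
    set u : EuclideanSpace ℝ (Fin n) := (InnerProductSpace.toDual ℝ _).symm f with hu
    have hinner : ∀ y, ⟪u, y⟫ = f y := fun y => InnerProductSpace.toDual_symm_apply
    have hune : u ≠ 0 := by
      intro h0
      have : f a = 0 := by rw [← hinner a, h0, inner_zero_left]
      have : f x₀ = 0 := by rw [← hinner x₀, h0, inner_zero_left]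
      have hfa := hf a ha
      rw [‹f a = 0›, this] at hfa
      exact lt_irrefl 0 hfa
    refine ⟨u, hune, fun x hxS => ?_⟩
    -- show f x ≤ f x₀ by taking combos with interior point
    have hle : f x ≤ f x₀ := by
      have htends : Tendsto (fun t : ℝ => t • a + (1 - t) • x) (𝓝[>] (0:ℝ)) (𝓝 x) := by
        have hc : Continuous fun t : ℝ => t • a + (1 - t) • x := by continuity
        have := hc.tendsto 0
        simp only [zero_smul, sub_zero, one_smul, zero_add] at this
        exact this.mono_left nhdsWithin_le_nhds
      have hev : ∀ᶠ t in 𝓝[>] (0:ℝ), f (t • a + (1 - t) • x) ≤ f x₀ := by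
        filter_upwards [eventually_mem_nhdsWithin, Filter.Tendsto.eventually_lt_const
          (show (0:ℝ) < 1 by norm_num) (tendsto_id.mono_left nhdsWithin_le_nhds)] with t ht ht1
        have hmem : t • a + (1 - t) • x ∈ interior S :=
          hS.combo_interior_closure_mem_interior ha (subset_closure hxS) ht (sub_nonneg.mpr (le_of_lt ht1))
            (by ring)
        exact (hf _ hmem).le
      exact le_of_tendsto ((f.continuous.tendsto x).comp htends) hev
    have := hinner (x - x₀)
    rw [map_sub] at this
    rw [this]; linarith
  · -- interior empty: S lies in a proper affine subspace
    obtain ⟨p, hp⟩ := hne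
    have hspan : affineSpan ℝ S ≠ ⊤ := by
      intro h
      exact hi (hS.interior_nonempty_iff_affineSpan_eq_top.mpr h)
    have hdir : (affineSpan ℝ S).direction ≠ ⊤ := by
      intro h
      exact hspan ((AffineSubspace.direction_eq_top_iff_of_nonempty
        ⟨p, subset_affineSpan ℝ S hp⟩).mp h)
    have horth : ((affineSpan ℝ S).direction)ᗮ ≠ ⊥ := by
      rwa [ne_eq, Submodule.orthogonal_eq_bot_iff]
    obtain ⟨u, hu_mem, hu0⟩ := Submodule.exists_mem_ne_zero_of_ne_bot horth
    have hconst : ∀ x ∈ S, ⟪u, x - p⟫ = 0 := by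
      intro x hxS
      have hv : x - p ∈ (affineSpan ℝ S).direction := by
        have := AffineSubspace.vsub_mem_direction (subset_affineSpan ℝ S hxS)
          (subset_affineSpan ℝ S hp)
        simpa using this
      have := (Submodule.mem_orthogonal _ u).mp hu_mem _ hv
      rwa [real_inner_comm] at this
    rcases le_or_gt ⟪u, p - x₀⟫ 0 with hd | hd
    · refine ⟨u, hu0, fun x hxS => ?_⟩
      have : x - x₀ = (x - p) + (p - x₀) := by abel
      rw [this, inner_add_right, hconst x hxS]
      linarith
    · refine ⟨-u, neg_ne_zero.mpr hu0, fun x hxS => ?_⟩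
      have h1 : x - x₀ = (x - p) + (p - x₀) := by abel
      rw [h1, inner_add_right, inner_neg_left, inner_neg_left, hconst x hxS]
      linarith

lemma aux_eps (μ : Measure (EuclideanSpace ℝ (Fin n))) (x₀ : EuclideanSpace ℝ (Fin n))
    (hx₀ : x₀ ∈ interior (convexHull ℝ (measureSupport μ))) :
    ∃ ε : ℝ, 0 < ε ∧ ∀ u : EuclideanSpace ℝ (Fin n), u ≠ 0 →
      ENNReal.ofReal ε ≤ μ {x | 0 < ⟪u, x - x₀⟫} := by
  by_contra hcon
  push_neg at hcon
  -- for each k pick a bad direction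
  have hpick : ∀ k : ℕ, ∃ v : EuclideanSpace ℝ (Fin n), ‖v‖ = 1 ∧
      μ {x | 0 < ⟪v, x - x₀⟫} < ENNReal.ofReal (1 / (k + 1)) := by
    intro k
    obtain ⟨u, hu0, hu⟩ := hcon (1 / (k + 1)) (by positivity)
    refine ⟨‖u‖⁻¹ • u, ?_, ?_⟩
    · simp [norm_smul, abs_of_nonneg, inv_mul_cancel₀ (norm_ne_zero_iff.mpr hu0)]
    · have hset : {x : EuclideanSpace ℝ (Fin n) | 0 < ⟪‖u‖⁻¹ • u, x - x₀⟫} =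
          {x | 0 < ⟪u, x - x₀⟫} := by
        ext x
        simp only [Set.mem_setOf_eq, real_inner_smul_left]
        constructor
        · intro h
          have hpos : (0:ℝ) < ‖u‖ := norm_pos_iff.mpr hu0
          nlinarith [mul_pos (inv_pos.mpr hpos) (mul_pos hpos (show (0:ℝ) < 1 by norm_num))]
        · intro h
          exact mul_pos (inv_pos.mpr (norm_pos_iff.mpr hu0)) h
      rw [hset]; exact hu
  choose v hv1 hv2 using hpick
  obtain ⟨w, hw, σ, hσ, hσt⟩ := (isCompact_sphere (0 : EuclideanSpace ℝ (Fin n)) 1).tendsto_subseq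
    (fun k => by simpa [mem_sphere_iff_norm] using hv1 k)
  have hw0 : w ≠ 0 := by
    intro h
    rw [h] at hw
    simp at hw
  -- B N increasing union equals halfspace of w
  set H : EuclideanSpace ℝ (Fin n) → Set (EuclideanSpace ℝ (Fin n)) :=
    fun u => {x | 0 < ⟪u, x - x₀⟫} with hH
  set B : ℕ → Set (EuclideanSpace ℝ (Fin n)) :=
    fun N => H w ∩ ⋂ (k : ℕ), ⋂ (_ : N ≤ k), H (v (σ k)) with hB
  have hBmono : Monotone B := by
    intro N M hNM
    apply Set.inter_subset_inter_right
    intro x hxB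
    simp only [Set.mem_iInter] at hxB ⊢
    intro k hk
    exact hxB k (hNM.trans hk)
  have hBunion : ⋃ N, B N = H w := by
    apply Set.Subset.antisymm
    · exact Set.iUnion_subset fun N => Set.inter_subset_left
    · intro x hx
      have hlim : Tendsto (fun k => ⟪v (σ k), x - x₀⟫) atTop (𝓝 ⟪w, x - x₀⟫) := by
        have hc : Continuous fun u : EuclideanSpace ℝ (Fin n) => ⟪u, x - x₀⟫ :=
          continuous_id.inner continuous_const
        exact (hc.tendsto w).comp hσt
      have hev : ∀ᶠ k in atTop, 0 < ⟪v (σ k), x - x₀⟫ :=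
        hlim.eventually_const_lt hx
      obtain ⟨N, hN⟩ := hev.exists_forall_of_atTop
      refine Set.mem_iUnion.mpr ⟨N, hx, ?_⟩
      simp only [Set.mem_iInter]
      exact fun k hk => hN k hk
  have hmeasH : ∀ u : EuclideanSpace ℝ (Fin n), MeasurableSet (H u) := by
    intro u
    exact (isOpen_lt continuous_const (continuous_const.inner
      (continuous_id.sub continuous_const))).measurableSet
  have hmeasB : ∀ N, MeasurableSet (B N) :=
    fun N => (hmeasH w).inter (MeasurableSet.iInter fun k => MeasurableSet.iInter
      fun _ => hmeasH _)
  have htendB : Tendsto (fun N => μ (B N)) atTop (𝓝 (μ (H w))) := by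
    have := tendsto_measure_iUnion_atTop (μ := μ) hBmono
    rwa [hBunion] at this
  have hbound : ∀ N, μ (B N) ≤ ENNReal.ofReal (1 / (N + 1)) := by
    intro N
    have h1 : B N ⊆ H (v (σ N)) := by
      intro x hxB
      have := hxB.2
      simp only [Set.mem_iInter] at this
      exact this N le_rfl
    calc μ (B N) ≤ μ (H (v (σ N))) := measure_mono h1
      _ ≤ ENNReal.ofReal (1 / (σ N + 1)) := (hv2 (σ N)).le
      _ ≤ ENNReal.ofReal (1 / (N + 1)) := by
          apply ENNReal.ofReal_le_ofReal
          apply one_div_le_one_div_of_le (by positivity)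
          have h : N ≤ σ N := hσ.le_apply
          have : (N : ℝ) ≤ (σ N : ℝ) := Nat.cast_le.mpr h
          linarith
  have hzero : Tendsto (fun N : ℕ => ENNReal.ofReal (1 / (N + 1))) atTop (𝓝 0) := by
    rw [show (0 : ℝ≥0∞) = ENNReal.ofReal 0 by simp]
    exact (ENNReal.continuous_ofReal.tendsto 0).comp tendsto_one_div_add_atTop_nhds_zero_nat
  have : μ (H w) ≤ 0 := le_of_tendsto_of_tendsto' htendB hzero hbound
  have hpos := aux_halfspace_pos μ x₀ hx₀ w hw0
  exact absurd (le_antisymm this zero_le) (ne_of_gt hpos)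

lemma aux_sublevel (φ : EuclideanSpace ℝ (Fin n) → EReal) (h0 : ∀ x, 0 ≤ φ x)
    (hc : ERealConvexOn φ) (M : ℝ) :
    Convex ℝ {x | φ x < (M : EReal)} := by
  intro x hx y hy a b ha hb hab
  simp only [Set.mem_setOf_eq] at hx hy ⊢
  have hxt : φ x ≠ ⊤ := (hx.trans (EReal.coe_lt_top M)).ne
  have hxb : φ x ≠ ⊥ := ne_of_gt (lt_of_lt_of_le (by simp) (h0 x))
  have hyt : φ y ≠ ⊤ := (hy.trans (EReal.coe_lt_top M)).ne
  have hyb : φ y ≠ ⊥ := ne_of_gt (lt_of_lt_of_le (by simp) (h0 y))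
  set r := (φ x).toReal with hr
  set s := (φ y).toReal with hs
  have hxr : φ x = (r : EReal) := (EReal.coe_toReal hxt hxb).symm
  have hys : φ y = (s : EReal) := (EReal.coe_toReal hyt hyb).symm
  have hrM : r < M := by rwa [hxr, EReal.coe_lt_coe_iff] at hx
  have hsM : s < M := by rwa [hys, EReal.coe_lt_coe_iff] at hy
  have hr0 : 0 ≤ r := by
    have := h0 x; rw [hxr] at this
    exact_mod_cast this
  have hs0 : 0 ≤ s := by
    have := h0 y; rw [hys] at this
    exact_mod_cast this
  have hkey := hc x y a b ha hb hab
  rw [hxr, hys] at hkey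
  have hsum : (a : EReal) * (r : EReal) + (b : EReal) * (s : EReal)
      = ((a * r + b * s : ℝ) : EReal) := by
    rw [← EReal.coe_mul, ← EReal.coe_mul, ← EReal.coe_add]
  rw [hsum] at hkey
  refine lt_of_le_of_lt hkey ?_
  rw [EReal.coe_lt_coe_iff]
  rcases eq_or_lt_of_le ha with ha0 | hapos
  · have hb1 : b = 1 := by linarith
    rw [← ha0, hb1]; simpa using hsM
  · have h1 : a * r < a * M := mul_lt_mul_of_pos_left hrM hapos
    have h2 : b * s ≤ b * M := mul_le_mul_of_nonneg_left hsM.le hb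
    nlinarith

lemma my_EReal_toReal_nonneg {a : EReal} (h : 0 ≤ a) : 0 ≤ a.toReal := by
  rcases eq_or_ne a ⊤ with rfl | ht
  · simp
  · have hb : a ≠ ⊥ := ne_of_gt (lt_of_lt_of_le (by simp) h)
    have := EReal.toReal_le_toReal h (by simp) ht
    simpa using this


end AuxLemmas

/-- if `x₀` lies in the interior of the convex hull of the support of a finite
Borel measure `μ`, then there is `C > 0` such that every non-negative `μ`-integrable convex
`φ` satisfies `φ(x₀) ≤ C ∫ φ dμ`. -/
theorem convex_function_bound_at_interior_point {n : ℕ}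
    (μ : MeasureTheory.Measure (EuclideanSpace ℝ (Fin n)))
    (hfin : μ Set.univ < ⊤)
    (x₀ : EuclideanSpace ℝ (Fin n))
    (hx₀ : x₀ ∈ interior (convexHull ℝ (measureSupport μ))) :
    ∃ C : ℝ, 0 < C ∧
      ∀ φ : EuclideanSpace ℝ (Fin n) → EReal, (∀ x, 0 ≤ φ x) → ERealConvexOn φ →
        ERealIntegrable φ μ →
        φ x₀ ≤ (((C * ∫ x, (φ x).toReal ∂μ) : ℝ) : EReal) := by
  have hfinI : IsFiniteMeasure μ := ⟨hfin⟩
  -- μ univ > 0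
  have hμpos : 0 < μ Set.univ := by
    have hne : (interior (convexHull ℝ (measureSupport μ))).Nonempty := ⟨x₀, hx₀⟩
    have hsne : (measureSupport μ).Nonempty := by
      by_contra h
      rw [Set.not_nonempty_iff_eq_empty] at h
      rw [h] at hne
      simp at hne
    obtain ⟨p, hp⟩ := hsne
    exact hp Set.univ isOpen_univ (Set.mem_univ p)
  obtain ⟨ε₁, hε₁, hε₁h⟩ := aux_eps μ x₀ hx₀
  set ε : ℝ := min ε₁ (μ Set.univ).toReal with hεdef
  have hε : 0 < ε := lt_min hε₁ (ENNReal.toReal_pos hμpos.ne' hfin.ne)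
  -- key property: every nonzero-direction halfspace and univ have measure ≥ ofReal ε
  have hεh : ∀ u : EuclideanSpace ℝ (Fin n), u ≠ 0 →
      ENNReal.ofReal ε ≤ μ {x | 0 < ⟪u, x - x₀⟫} :=
    fun u hu => le_trans (ENNReal.ofReal_le_ofReal (min_le_left _ _)) (hε₁h u hu)
  have hεu : ENNReal.ofReal ε ≤ μ Set.univ := by
    calc ENNReal.ofReal ε ≤ ENNReal.ofReal (μ Set.univ).toReal :=
          ENNReal.ofReal_le_ofReal (min_le_right _ _)
      _ = μ Set.univ := ENNReal.ofReal_toReal hfin.ne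
  refine ⟨ε⁻¹, inv_pos.mpr hε, ?_⟩
  intro φ h0 hconv hint
  obtain ⟨hae, hInt⟩ := hint
  set I : ℝ := ∫ x, (φ x).toReal ∂μ with hI
  have hI0 : 0 ≤ I := by
    apply integral_nonneg
    intro x
    exact my_EReal_toReal_nonneg (h0 x)
  -- key inequality
  have hkey : ∀ M : ℝ, 0 ≤ M → (M : EReal) ≤ φ x₀ → M * ε ≤ I := by
    intro M hM hMφ
    set S : Set (EuclideanSpace ℝ (Fin n)) := {x | φ x < (M : EReal)} with hS
    have hx₀S : x₀ ∉ S := fun h => absurd hMφ (not_le.mpr h)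
    -- find a measurable set T with measure ≥ ofReal ε on which φ ≥ M
    have hT : ∃ T : Set (EuclideanSpace ℝ (Fin n)), MeasurableSet T ∧
        ENNReal.ofReal ε ≤ μ T ∧ ∀ x ∈ T, (M : EReal) ≤ φ x := by
      rcases Set.eq_empty_or_nonempty S with hSe | hSne
      · refine ⟨Set.univ, MeasurableSet.univ, hεu, fun x _ => ?_⟩
        by_contra hlt
        have : x ∈ S := not_le.mp hlt
        rw [hSe] at this
        exact this
      · obtain ⟨u, hu0, husep⟩ := aux_sep S (aux_sublevel φ h0 hconv M) x₀ hx₀S hSne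
        refine ⟨{x | 0 < ⟪u, x - x₀⟫}, ?_, hεh u hu0, ?_⟩
        · exact (isOpen_lt continuous_const (continuous_const.inner
            (continuous_id.sub continuous_const))).measurableSet
        · intro x hx
          by_contra hlt
          have hxS : x ∈ S := not_le.mp hlt
          exact absurd hx (not_lt.mpr (husep x hxS))
    obtain ⟨T, hTm, hTμ, hTφ⟩ := hT
    have hTfin : μ T ≠ ⊤ := (lt_of_le_of_lt (measure_mono (Set.subset_univ T)) hfin).ne
    have hεT : ε ≤ (μ T).toReal := by
      rw [← ENNReal.ofReal_le_iff_le_toReal hTfin]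
      exact hTμ
    -- integral over T
    have haeT : ∀ᵐ x ∂(μ.restrict T), M ≤ (φ x).toReal := by
      rw [ae_restrict_iff' hTm]
      filter_upwards [hae] with x hx hxT
      have h1 := hTφ x hxT
      have hb : φ x ≠ ⊥ := hx.2
      have ht : φ x ≠ ⊤ := hx.1
      have : φ x = ((φ x).toReal : EReal) := (EReal.coe_toReal ht hb).symm
      rw [this] at h1
      exact_mod_cast h1
    have hIT : M * (μ T).toReal ≤ ∫ x in T, (φ x).toReal ∂μ := by
      have hconst : ∫ _ in T, M ∂μ = (μ T).toReal * M := by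
        rw [setIntegral_const, smul_eq_mul]
        rfl
      have := integral_mono_ae (integrable_const M) (hInt.restrict (s := T)) haeT
      rw [hconst] at this
      linarith [this]
    have hTI : ∫ x in T, (φ x).toReal ∂μ ≤ I := by
      apply setIntegral_le_integral hInt
      filter_upwards with x
      exact my_EReal_toReal_nonneg (h0 x)
    calc M * ε ≤ M * (μ T).toReal := mul_le_mul_of_nonneg_left hεT hM
      _ ≤ I := le_trans hIT hTI
  -- φ x₀ is finite
  have hnetop : φ x₀ ≠ ⊤ := by
    intro htop
    have := hkey ((I + 1) / ε) (by positivity) (by rw [htop]; exact le_top)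
    rw [div_mul_cancel₀ _ hε.ne'] at this
    linarith
  have hnebot : φ x₀ ≠ ⊥ := ne_of_gt (lt_of_lt_of_le (by simp) (h0 x₀))
  set v : ℝ := (φ x₀).toReal with hv
  have hvx : φ x₀ = (v : EReal) := (EReal.coe_toReal hnetop hnebot).symm
  have hv0 : 0 ≤ v := my_EReal_toReal_nonneg (h0 x₀)
  have hvkey : v * ε ≤ I := hkey v hv0 (le_of_eq hvx.symm)
  rw [hvx, EReal.coe_le_coe_iff]
  rw [inv_mul_eq_div, le_div_iff₀ hε]
  exact hvkey
end
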